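/- arXiv:2010.08266 — 7 statements merged into one kernel-verified Lean document; each statement's English description precedes it below -/
import Mathlib

section
/- Let G and H be non-isomorphic graphs of order n with b(G,H) ≥ 1, let G⁺ be a supercard of G and H with distinguished vertices v, w such that G⁺ − w ≅ G and G⁺ − v ≅ H. If Y ⊆ B_{vw}(G⁺) contains the identity permutation and satisfies that for all distinct λ, π ∈ Y we have λ⁻¹(v) ≠ π⁻¹(v) and λ(w) ≠ π(w), then Y is maximal with respect to these properties if and only if |Y| = b(G, H). In particular, all maximum saturating sets of B_{vw}(G⁺) have cardinality b(G, H). -/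
open SimpleGraph

/-- The degree of a vertex, defined via the neighbour set. -/
noncomputable def deg {V : Type*} (G : SimpleGraph V) (v : V) : ℕ := (G.neighborSet v).ncard

/-- `tau G v` is the number of neighbours of `v` of degree 2 in `G`. -/
noncomputable def tau {V : Type*} (G : SimpleGraph V) (v : V) : ℕ :=
  {u ∈ G.neighborSet v | deg G u = 2}.ncard

/-- A (finite) graph is a cycle graph iff it is connected and 2-regular. -/
def IsCycleGraph {V : Type*} (G : SimpleGraph V) : Prop := G.Connected ∧ ∀ v, deg G v = 2

/-- A (finite) graph is a path graph iff it is a connected acyclic graph with maximum degree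
at most two. -/
def IsPathGraph {V : Type*} (G : SimpleGraph V) : Prop :=
  G.Connected ∧ G.IsAcyclic ∧ ∀ v, deg G v ≤ 2

/-- The skeleton of `G`: the induced subgraph on vertices of degree at least 2
(i.e. delete all leaves and isolated vertices). -/
def skeleton {V : Type*} (G : SimpleGraph V) : SimpleGraph {v : V | 2 ≤ deg G v} :=
  G.induce {v : V | 2 ≤ deg G v}

/-- A sunshine graph: a connected graph whose skeleton is a cycle. -/
def IsSunshine {V : Type*} (G : SimpleGraph V) : Prop := G.Connected ∧ IsCycleGraph (skeleton G)

/-- A caterpillar: a connected graph whose skeleton is a path. -/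
def IsCaterpillar {V : Type*} (G : SimpleGraph V) : Prop := G.Connected ∧ IsPathGraph (skeleton G)

/-- The diameter of a finite graph: the maximum distance between two vertices. -/
noncomputable def diamNat {V : Type*} (G : SimpleGraph V) : ℕ :=
  sSup (Set.range fun p : V × V => G.dist p.1 p.2)

/-- Graphs on `Fin n` up to isomorphism. -/
def graphSetoid (n : ℕ) : Setoid (SimpleGraph (Fin n)) where
  r G H := Nonempty (G ≃g H)
  iseqv := ⟨fun G => ⟨Iso.refl⟩, fun ⟨e⟩ => ⟨e.symm⟩, fun ⟨e⟩ ⟨f⟩ => ⟨e.trans f⟩⟩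

/-- Isomorphism classes of graphs on `n` vertices. -/
abbrev IsoClass (n : ℕ) : Type := Quotient (graphSetoid n)

/-- The card `G - v`, transported to a graph on `Fin (|V| - 1)`. -/
noncomputable def cardAt {V : Type*} [Fintype V] [DecidableEq V] (G : SimpleGraph V) (v : V) :
    SimpleGraph (Fin (Fintype.card V - 1)) :=
  G.comap fun i =>
    ((Fintype.equivOfCardEq
      (show Fintype.card (Fin (Fintype.card V - 1)) = Fintype.card {u : V // u ≠ v} by
        simp [Fintype.card_subtype_compl])) i : {u : V // u ≠ v}).val

/-- The deck of `G` : the multiset of isomorphism classes of its vertex-deleted subgraphs. -/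
noncomputable def deck {V : Type*} [Fintype V] [DecidableEq V] (G : SimpleGraph V) :
    Multiset (IsoClass (Fintype.card V - 1)) :=
  Finset.univ.val.map fun v => Quotient.mk (graphSetoid (Fintype.card V - 1)) (cardAt G v)

/-- The number of common cards of `G` and `H` : the cardinality of the multiset
intersection of their decks. -/
noncomputable def commonCards {V : Type*} [Fintype V] [DecidableEq V]
    (G H : SimpleGraph V) : ℕ :=
  letI := Classical.decEq (IsoClass (Fintype.card V - 1))
  Multiset.card (deck G ∩ deck H)

/-- `Gp` is a supercard of `G` : some card of `Gp` is isomorphic to `G`. -/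
def IsSupercardOf {W V : Type*} (Gp : SimpleGraph W) (G : SimpleGraph V) : Prop :=
  ∃ w : W, Nonempty (G ≃g Gp.induce {u : W | u ≠ w})

/-- `l` is an active permutation of `Gp` with respect to `v` and `w`:
`l ((Gp - w) - l⁻¹ v) = (Gp - v) - l w`. -/
def ActivePerm {V : Type*} (Gp : SimpleGraph V) (v w : V) (l : Equiv.Perm V) : Prop :=
  ∀ a b : V, a ≠ w → a ≠ l.symm v → b ≠ w → b ≠ l.symm v → (Gp.Adj a b ↔ Gp.Adj (l a) (l b))

/-- Property (b) of a saturating set: distinct permutations have distinct `l⁻¹ v` and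
distinct `l w`. -/
def SatProp {V : Type*} (v w : V) (Y : Set (Equiv.Perm V)) : Prop :=
  ∀ l ∈ Y, ∀ p ∈ Y, l ≠ p → l.symm v ≠ p.symm v ∧ l w ≠ p w

/-- `θ` maps `Up - w` isomorphically onto `Up - θ w` (the defining property of `B_U`). -/
def IsCardIso {V : Type*} (Up : SimpleGraph V) (w : V) (θ : Equiv.Perm V) : Prop :=
  ∀ a b : V, a ≠ w → b ≠ w → (Up.Adj a b ↔ Up.Adj (θ a) (θ b))

/-- `θ` is an automorphism of `G`. -/
def IsAutG {V : Type*} (G : SimpleGraph V) (θ : Equiv.Perm V) : Prop :=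
  ∀ a b, G.Adj (θ a) (θ b) ↔ G.Adj a b

/-- A d-leaf: a leaf, in a component of order at least three, all of whose neighbours have
degree at least 3. -/
def IsDLeaf {V : Type*} (G : SimpleGraph V) (v : V) : Prop :=
  deg G v = 1 ∧ 3 ≤ (G.connectedComponentMk v).supp.ncard ∧ ∀ u, G.Adj v u → 3 ≤ deg G u

/-- A peripheral leaf: a leaf at the end of some longest path. -/
def IsPeripheralLeaf {V : Type*} (G : SimpleGraph V) (v : V) : Prop :=
  deg G v = 1 ∧ ∃ (u : V) (p : G.Walk v u), p.IsPath ∧ p.length = diamNat G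

/-- An endpoint of the skeleton path: a skeleton vertex of skeleton-degree at most 1. -/
def IsSkelEndpoint {V : Type*} (G : SimpleGraph V) (y : V) : Prop :=
  ∃ h : 2 ≤ deg G y, deg (skeleton G) ⟨y, h⟩ ≤ 1



/-! ### Auxiliary lemmas -/

section MatchingCount
open Finset

lemma count_map_finset {α C : Type*} [DecidableEq C] (A : Finset α) (f : α → C) (c : C) :
    Multiset.count c (A.val.map f) = (A.filter (fun a => f a = c)).card := by
  rw [Multiset.count_map]
  congr 1
  exact Multiset.filter_congr (fun a _ => by constructor <;> exact fun h => h.symm)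

lemma inter_card_eq_sum {C : Type*} [DecidableEq C] (s t : Multiset C) :
    Multiset.card (s ∩ t) = ∑ c ∈ s.toFinset, min (Multiset.count c s) (Multiset.count c t) := by
  rw [← Multiset.toFinset_sum_count_eq (s ∩ t)]
  have hsub : (s ∩ t).toFinset ⊆ s.toFinset := by
    intro c hc
    rw [Multiset.mem_toFinset, ← Multiset.count_pos] at hc ⊢
    rw [Multiset.count_inter] at hc
    omega
  rw [Finset.sum_subset hsub]
  · exact Finset.sum_congr rfl fun c _ => by rw [Multiset.count_inter]
  · intro c _ hc
    simp only [Multiset.mem_toFinset, ← Multiset.count_pos, not_lt, Nat.le_zero] at hc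
    exact hc

lemma maximal_matching_card {α β C : Type*} [DecidableEq α] [DecidableEq β] [DecidableEq C]
    (A : Finset α) (B : Finset β) (f : α → C) (g : β → C) (M : Finset (α × β))
    (hM : ∀ p ∈ M, p.1 ∈ A ∧ p.2 ∈ B ∧ f p.1 = g p.2)
    (hinj1 : ∀ p ∈ M, ∀ q ∈ M, p.1 = q.1 → p = q)
    (hinj2 : ∀ p ∈ M, ∀ q ∈ M, p.2 = q.2 → p = q) :
    (¬ ∃ a ∈ A, ∃ b ∈ B, f a = g b ∧ ∀ p ∈ M, p.1 ≠ a ∧ p.2 ≠ b) ↔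
      M.card = Multiset.card (A.val.map f ∩ B.val.map g) := by
  classical
  set T := (A.val.map f).toFinset with hT
  have hcardM : M.card = ∑ c ∈ T, (M.filter (fun p => f p.1 = c)).card := by
    apply Finset.card_eq_sum_card_fiberwise
    intro p hp
    simp only [hT, Multiset.mem_toFinset, Multiset.mem_map]
    exact Multiset.mem_toFinset.2 (Multiset.mem_map.2 ⟨p.1, (hM p hp).1, rfl⟩)
  have hinter : Multiset.card (A.val.map f ∩ B.val.map g) =
      ∑ c ∈ T, min ((A.filter (fun a => f a = c)).card) ((B.filter (fun b => g b = c)).card) := by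
    rw [inter_card_eq_sum]
    exact Finset.sum_congr rfl fun c _ => by rw [count_map_finset, count_map_finset]
  have hbound : ∀ c, (M.filter (fun p => f p.1 = c)).card ≤
      min ((A.filter (fun a => f a = c)).card) ((B.filter (fun b => g b = c)).card) := by
    intro c
    have h1 : (M.filter (fun p => f p.1 = c)).card ≤ (A.filter (fun a => f a = c)).card := by
      rw [← Finset.card_image_of_injOn (f := Prod.fst) ?hinj]
      · apply Finset.card_le_card
        intro a ha
        simp only [Finset.mem_image, Finset.mem_filter] at ha ⊢
        obtain ⟨p, ⟨hpM, hpc⟩, rfl⟩ := ha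
        exact ⟨(hM p hpM).1, hpc⟩
      · intro p hp q hq hpq
        exact hinj1 p (Finset.mem_of_mem_filter p hp) q (Finset.mem_of_mem_filter q hq) hpq
    have h2 : (M.filter (fun p => f p.1 = c)).card ≤ (B.filter (fun b => g b = c)).card := by
      rw [← Finset.card_image_of_injOn (f := Prod.snd) ?hinj2]
      · apply Finset.card_le_card
        intro b hb
        simp only [Finset.mem_image, Finset.mem_filter] at hb ⊢
        obtain ⟨p, ⟨hpM, hpc⟩, rfl⟩ := hb
        exact ⟨(hM p hpM).2.1, ((hM p hpM).2.2).symm.trans hpc ▸ rfl⟩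
      · intro p hp q hq hpq
        exact hinj2 p (Finset.mem_of_mem_filter p hp) q (Finset.mem_of_mem_filter q hq) hpq
    omega
  constructor
  · intro hnoext
    rw [hcardM, hinter]
    apply Finset.sum_congr rfl
    intro c hc
    by_contra hne
    have hlt : (M.filter (fun p => f p.1 = c)).card <
        min ((A.filter (fun a => f a = c)).card) ((B.filter (fun b => g b = c)).card) :=
      lt_of_le_of_ne (hbound c) hne
    have hA : ((M.filter (fun p => f p.1 = c)).image Prod.fst).card < (A.filter (fun a => f a = c)).card := by
      calc ((M.filter (fun p => f p.1 = c)).image Prod.fst).card ≤ (M.filter (fun p => f p.1 = c)).card :=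
            Finset.card_image_le
        _ < _ := lt_of_lt_of_le hlt (min_le_left _ _)
    have hB : ((M.filter (fun p => f p.1 = c)).image Prod.snd).card < (B.filter (fun b => g b = c)).card := by
      calc ((M.filter (fun p => f p.1 = c)).image Prod.snd).card ≤ (M.filter (fun p => f p.1 = c)).card :=
            Finset.card_image_le
        _ < _ := lt_of_lt_of_le hlt (min_le_right _ _)
    have hsubA : ((M.filter (fun p => f p.1 = c)).image Prod.fst) ⊆ (A.filter (fun a => f a = c)) := by
      intro a ha
      simp only [Finset.mem_image, Finset.mem_filter] at ha ⊢
      obtain ⟨p, ⟨hpM, hpc⟩, rfl⟩ := ha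
      exact ⟨(hM p hpM).1, hpc⟩
    have hsubB : ((M.filter (fun p => f p.1 = c)).image Prod.snd) ⊆ (B.filter (fun b => g b = c)) := by
      intro b hb
      simp only [Finset.mem_image, Finset.mem_filter] at hb ⊢
      obtain ⟨p, ⟨hpM, hpc⟩, rfl⟩ := hb
      exact ⟨(hM p hpM).2.1, ((hM p hpM).2.2) ▸ hpc⟩
    obtain ⟨a, haA, haU⟩ := (Finset.ssubset_iff_of_subset hsubA).1
      (hsubA.ssubset_of_not_subset (fun h => absurd (Finset.card_le_card h) (not_le.2 hA)))
    obtain ⟨b, hbB, hbU⟩ := (Finset.ssubset_iff_of_subset hsubB).1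
      (hsubB.ssubset_of_not_subset (fun h => absurd (Finset.card_le_card h) (not_le.2 hB)))
    apply hnoext
    rw [Finset.mem_filter] at haA hbB
    refine ⟨a, haA.1, b, hbB.1, haA.2.trans hbB.2.symm, ?_⟩
    intro p hp
    constructor
    · intro hpa
      apply haU
      simp only [Finset.mem_image, Finset.mem_filter]
      exact ⟨p, ⟨hp, hpa ▸ haA.2⟩, hpa⟩
    · intro hpb
      apply hbU
      simp only [Finset.mem_image, Finset.mem_filter]
      refine ⟨p, ⟨hp, ?_⟩, hpb⟩
      rw [(hM p hp).2.2, hpb, hbB.2]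
  · intro heq ⟨a, haA, b, hbB, hfg, hun⟩
    set c := f a with hc
    have hcT : c ∈ T := by
      simp only [hT, Multiset.mem_toFinset, Multiset.mem_map]
      exact ⟨a, haA, rfl⟩
    have hsubA : ((M.filter (fun p => f p.1 = c)).image Prod.fst) ⊆ (A.filter (fun a => f a = c)).erase a := by
      intro x hx
      simp only [Finset.mem_image, Finset.mem_filter, Finset.mem_erase] at hx ⊢
      obtain ⟨p, ⟨hpM, hpc⟩, rfl⟩ := hx
      exact ⟨(hun p hpM).1, (hM p hpM).1, hpc⟩
    have hlt : (M.filter (fun p => f p.1 = c)).card < (A.filter (fun a => f a = c)).card := by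
      have h1 : (M.filter (fun p => f p.1 = c)).card = ((M.filter (fun p => f p.1 = c)).image Prod.fst).card := by
        rw [Finset.card_image_of_injOn]
        intro p hp q hq hpq
        exact hinj1 p (Finset.mem_of_mem_filter p hp) q (Finset.mem_of_mem_filter q hq) hpq
      have h2 := Finset.card_le_card hsubA
      have h3 : ((A.filter (fun a => f a = c)).erase a).card < (A.filter (fun a => f a = c)).card :=
        Finset.card_erase_lt_of_mem (Finset.mem_filter.2 ⟨haA, rfl⟩)
      omega
    have hsubB : ((M.filter (fun p => f p.1 = c)).image Prod.snd) ⊆ (B.filter (fun b => g b = c)).erase b := by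
      intro x hx
      simp only [Finset.mem_image, Finset.mem_filter, Finset.mem_erase] at hx ⊢
      obtain ⟨p, ⟨hpM, hpc⟩, rfl⟩ := hx
      exact ⟨(hun p hpM).2, (hM p hpM).2.1, (hM p hpM).2.2 ▸ hpc⟩
    have hltB : (M.filter (fun p => f p.1 = c)).card < (B.filter (fun b => g b = c)).card := by
      have h1 : (M.filter (fun p => f p.1 = c)).card = ((M.filter (fun p => f p.1 = c)).image Prod.snd).card := by
        rw [Finset.card_image_of_injOn]
        intro p hp q hq hpq
        exact hinj2 p (Finset.mem_of_mem_filter p hp) q (Finset.mem_of_mem_filter q hq) hpq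
      have h2 := Finset.card_le_card hsubB
      have h3 : ((B.filter (fun x => g x = c)).erase b).card < (B.filter (fun x => g x = c)).card :=
        Finset.card_erase_lt_of_mem (Finset.mem_filter.2 ⟨hbB, hfg.symm⟩)
      omega
    rw [hcardM, hinter] at heq
    have hstrict : ∑ c ∈ T, (M.filter (fun p => f p.1 = c)).card <
        ∑ c ∈ T, min ((A.filter (fun a => f a = c)).card) ((B.filter (fun b => g b = c)).card) := by
      apply Finset.sum_lt_sum (fun i _ => hbound i)
      exact ⟨c, hcT, by omega⟩
    omega

end MatchingCount

section GraphAux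

/-- iso between `comap` along an equiv and the original graph -/
def comapIso {α β : Type*} (e : β ≃ α) (G : SimpleGraph α) : G.comap e ≃g G :=
  ⟨e, Iff.rfl⟩

/-- The isomorphism class of a graph on any `Fintype` of cardinality `k`. -/
noncomputable def cls {α : Type*} [Fintype α] {k : ℕ} (h : Fintype.card α = k)
    (G : SimpleGraph α) : IsoClass k :=
  Quotient.mk (graphSetoid k) (G.comap ((Fintype.equivFinOfCardEq h).symm))

lemma cls_congr {α β : Type*} [Fintype α] [Fintype β] {k : ℕ} (hα : Fintype.card α = k)
    (hβ : Fintype.card β = k) {G : SimpleGraph α} {G' : SimpleGraph β}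
    (e : Nonempty (G ≃g G')) : cls hα G = cls hβ G' := by
  obtain ⟨e⟩ := e
  exact Quotient.sound ⟨(comapIso _ G).trans (e.trans (comapIso _ G').symm)⟩

lemma cls_exact {α β : Type*} [Fintype α] [Fintype β] {k : ℕ} (hα : Fintype.card α = k)
    (hβ : Fintype.card β = k) {G : SimpleGraph α} {G' : SimpleGraph β}
    (h : cls hα G = cls hβ G') : Nonempty (G ≃g G') := by
  obtain ⟨e⟩ := Quotient.exact h
  exact ⟨((comapIso _ G).symm.trans e).trans (comapIso _ G')⟩

lemma cls_self {k : ℕ} (X : SimpleGraph (Fin k)) (h : Fintype.card (Fin k) = k) :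
    cls h X = Quotient.mk (graphSetoid k) X :=
  Quotient.sound ⟨comapIso _ X⟩

lemma cardAt_iso {V : Type*} [Fintype V] [DecidableEq V] (G : SimpleGraph V) (u : V) :
    Nonempty (cardAt G u ≃g G.induce {x : V | x ≠ u}) := by
  exact ⟨⟨(Fintype.equivOfCardEq
      (show Fintype.card (Fin (Fintype.card V - 1)) = Fintype.card {u' : V // u' ≠ u} by
        simp [Fintype.card_subtype_compl])).trans
      (Equiv.subtypeEquivRight (fun x => Iff.rfl)), Iff.rfl⟩⟩

lemma induce_trans_iso {V W : Type*} (Gp : SimpleGraph V) (G : SimpleGraph W) (w : V)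
    (φ : G ≃g Gp.induce {u : V | u ≠ w}) (u : W) :
    Nonempty (G.induce {x : W | x ≠ u} ≃g Gp.induce {a : V | a ≠ w ∧ a ≠ (φ u).val}) := by
  refine ⟨⟨Equiv.mk
    (fun x => ⟨(φ x.val).val, (φ x.val).prop, fun h => x.prop (φ.toEquiv.injective (Subtype.ext h))⟩)
    (fun a => ⟨(φ.symm ⟨a.val, a.prop.1⟩ : W), fun h => a.prop.2 (by
      have h2 : (⟨a.val, a.prop.1⟩ : {u' : V | u' ≠ w}) = φ u := by
        have h3 := congrArg φ h
        rwa [RelIso.apply_symm_apply] at h3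
      exact congrArg Subtype.val h2)⟩)
    (fun x => by ext; simp)
    (fun a => by ext; simp only [RelIso.apply_symm_apply]), φ.map_rel_iff⟩⟩

lemma card_set_ne_ne {m : ℕ} (w x : Fin m) (h : x ≠ w) :
    Fintype.card ↥{a : Fin m | a ≠ w ∧ a ≠ x} = m - 2 := by
  rw [Fintype.card_congr (Equiv.subtypeEquivRight
    (p := fun a : Fin m => a ∈ ({a | a ≠ w ∧ a ≠ x} : Set (Fin m)))
    (q := fun a => a ≠ w ∧ a ≠ x) (fun a => Iff.rfl))]
  rw [Fintype.card_subtype]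
  rw [show (Finset.univ.filter fun a : Fin m => a ≠ w ∧ a ≠ x) = Finset.univ \ {w, x} by
    ext a; simp [not_or]]
  rw [Finset.card_sdiff_of_subset (Finset.subset_univ _), Finset.card_univ, Fintype.card_fin,
    Finset.card_pair (Ne.symm h)]

lemma deck_eq_map {n : ℕ} (G : SimpleGraph (Fin n)) (Gp : SimpleGraph (Fin (n + 1)))
    (w : Fin (n + 1)) (φ : G ≃g Gp.induce {u : Fin (n + 1) | u ≠ w})
    (F : Fin (n + 1) → IsoClass (Fintype.card (Fin n) - 1))
    (hcard : ∀ x : Fin (n + 1), x ≠ w →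
      Fintype.card ↥{a : Fin (n + 1) | a ≠ w ∧ a ≠ x} = Fintype.card (Fin n) - 1)
    (hF : ∀ (x : Fin (n + 1)) (hx : x ≠ w),
      F x = cls (hcard x hx) (Gp.induce {a : Fin (n + 1) | a ≠ w ∧ a ≠ x})) :
    deck G = (Finset.univ.erase w).val.map F := by
  have hemb : Function.Injective (fun u : Fin n => ((φ u : {u' : Fin (n+1) | u' ≠ w}) : Fin (n+1))) := by
    intro a b h
    exact φ.toEquiv.injective (Subtype.ext h)
  set emb : Fin n ↪ Fin (n + 1) := ⟨_, hemb⟩ with hembdef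
  have him : Finset.univ.map emb = Finset.univ.erase w := by
    ext a
    simp only [Finset.mem_map, Finset.mem_univ, true_and, and_true, Finset.mem_erase, hembdef,
      Function.Embedding.coeFn_mk]
    constructor
    · rintro ⟨u, rfl⟩
      exact (φ u).prop
    · intro ha
      exact ⟨φ.symm ⟨a, ha⟩, congrArg Subtype.val (φ.apply_symm_apply _)⟩
  rw [← him]
  rw [Finset.map_val, Multiset.map_map]
  unfold deck
  apply Multiset.map_congr rfl
  intro u _
  have h1 : F (emb u) = cls (hcard _ (φ u).prop) (Gp.induce {a : Fin (n+1) | a ≠ w ∧ a ≠ (φ u).val}) :=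
    hF _ (φ u).prop
  have h2 : Quotient.mk (graphSetoid (Fintype.card (Fin n) - 1)) (cardAt G u) =
      cls (Fintype.card_fin _) (cardAt G u) := (cls_self _ _).symm
  rw [Function.comp_apply, h1, h2]
  apply cls_congr
  obtain ⟨e1⟩ := cardAt_iso G u
  obtain ⟨e2⟩ := induce_trans_iso Gp G w φ u
  exact ⟨e1.trans e2⟩

lemma iso_of_activePerm {m : ℕ} (Gp : SimpleGraph (Fin m)) (v w : Fin m) (σ : Equiv.Perm (Fin m))
    (hσ : ActivePerm Gp v w σ) :
    Nonempty (Gp.induce {a : Fin m | a ≠ w ∧ a ≠ σ.symm v} ≃g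
      Gp.induce {a : Fin m | a ≠ v ∧ a ≠ σ w}) := by
  refine ⟨⟨Equiv.subtypeEquiv σ (fun a => ?_), ?_⟩⟩
  · constructor
    · rintro ⟨h1, h2⟩
      exact ⟨fun hv => h2 (by rw [← hv, Equiv.symm_apply_apply]),
        fun hw => h1 (σ.injective hw)⟩
    · rintro ⟨h1, h2⟩
      exact ⟨fun hw => h2 (by rw [hw]), fun hxx => h1 (by rw [hxx, Equiv.apply_symm_apply])⟩
  · intro a b
    exact (hσ a.val b.val a.prop.1 a.prop.2 b.prop.1 b.prop.2).symm

lemma iso_cards_of_symm_eq {m : ℕ} (Gp : SimpleGraph (Fin m)) (v w : Fin m)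
    (σ : Equiv.Perm (Fin m)) (hσ : ActivePerm Gp v w σ) (h : σ.symm v = w) :
    Nonempty (Gp.induce {u : Fin m | u ≠ w} ≃g Gp.induce {u : Fin m | u ≠ v}) := by
  refine ⟨⟨Equiv.subtypeEquiv σ (fun a => ?_), ?_⟩⟩
  · constructor
    · intro h1 hv
      exact h1 (by rw [← h, ← hv, Equiv.symm_apply_apply])
    · intro h1 hw
      exact h1 (by rw [hw, ← h, Equiv.apply_symm_apply])
  · intro a b
    exact (hσ a.val b.val a.prop (h ▸ a.prop) b.prop (h ▸ b.prop)).symm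

lemma activePerm_of_iso {m : ℕ} (Gp : SimpleGraph (Fin m)) (v w x y : Fin m)
    (hx : x ≠ w) (hy : y ≠ v)
    (ψ : Gp.induce {a : Fin m | a ≠ w ∧ a ≠ x} ≃g Gp.induce {a : Fin m | a ≠ v ∧ a ≠ y}) :
    ∃ σ : Equiv.Perm (Fin m), ActivePerm Gp v w σ ∧ σ.symm v = x ∧ σ w = y := by
  set f : Fin m → Fin m := fun a =>
    if h1 : a = w then y else if h2 : a = x then v else (ψ ⟨a, ⟨h1, h2⟩⟩).val with hf
  set g : Fin m → Fin m := fun b =>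
    if h1 : b = v then x else if h2 : b = y then w else (ψ.symm ⟨b, ⟨h1, h2⟩⟩).val with hg
  have hfw : f w = y := by simp only [hf]; exact dif_pos trivial
  have hfx : f x = v := by simp only [hf]; rw [dif_neg hx]; exact dif_pos trivial
  have hfother : ∀ a (h1 : a ≠ w) (h2 : a ≠ x), f a = (ψ ⟨a, ⟨h1, h2⟩⟩).val := by
    intro a h1 h2
    simp only [hf]
    rw [dif_neg h1, dif_neg h2]
  have hgv : g v = x := by simp only [hg]; exact dif_pos trivial
  have hgy : g y = w := by simp only [hg]; rw [dif_neg hy]; exact dif_pos trivial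
  have hgother : ∀ b (k1 : b ≠ v) (k2 : b ≠ y), g b = (ψ.symm ⟨b, ⟨k1, k2⟩⟩).val := by
    intro b k1 k2
    simp only [hg]
    rw [dif_neg k1, dif_neg k2]
  have hleft : Function.LeftInverse g f := by
    intro a
    by_cases h1 : a = w
    · subst h1; rw [hfw, hgy]
    · by_cases h2 : a = x
      · subst h2; rw [hfx, hgv]
      · rw [hfother a h1 h2,
          hgother _ (ψ ⟨a, ⟨h1, h2⟩⟩).prop.1 (ψ ⟨a, ⟨h1, h2⟩⟩).prop.2]
        exact congrArg Subtype.val (ψ.symm_apply_apply _)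
  have hright : Function.RightInverse g f := by
    intro b
    by_cases k1 : b = v
    · subst k1; rw [hgv, hfx]
    · by_cases k2 : b = y
      · subst k2; rw [hgy, hfw]
      · rw [hgother b k1 k2,
          hfother _ (ψ.symm ⟨b, ⟨k1, k2⟩⟩).prop.1 (ψ.symm ⟨b, ⟨k1, k2⟩⟩).prop.2]
        exact congrArg Subtype.val (ψ.apply_symm_apply _)
  set σ : Equiv.Perm (Fin m) := ⟨f, g, hleft, hright⟩ with hσdef
  have hσw : σ w = y := hfw
  have hσv : σ.symm v = x := hgv
  refine ⟨σ, ?_, hσv, hσw⟩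
  intro a b ha1 ha2 hb1 hb2
  rw [hσv] at ha2 hb2
  have hga : σ a = (ψ ⟨a, ⟨ha1, ha2⟩⟩).val := hfother a ha1 ha2
  have hgb : σ b = (ψ ⟨b, ⟨hb1, hb2⟩⟩).val := hfother b hb1 hb2
  rw [hga, hgb]
  exact Iff.symm (ψ.map_rel_iff (a := ⟨a, ⟨ha1, ha2⟩⟩) (b := ⟨b, ⟨hb1, hb2⟩⟩))

end GraphAux

theorem stmt3 (n : ℕ) (G H : SimpleGraph (Fin n)) (hni : IsEmpty (G ≃g H))
    (hb : 1 ≤ commonCards G H) (Gp : SimpleGraph (Fin (n + 1))) (v w : Fin (n + 1))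
    (hG : Nonempty (G ≃g Gp.induce {u : Fin (n + 1) | u ≠ w}))
    (hH : Nonempty (H ≃g Gp.induce {u : Fin (n + 1) | u ≠ v}))
    (Y : Set (Equiv.Perm (Fin (n + 1)))) (hYB : ∀ l ∈ Y, ActivePerm Gp v w l)
    (hid : 1 ∈ Y) (hsat : SatProp v w Y) :
    (¬ ∃ σ : Equiv.Perm (Fin (n + 1)),
        ActivePerm Gp v w σ ∧ σ ∉ Y ∧ SatProp v w (insert σ Y)) ↔
      Y.ncard = commonCards G H := by
  letI instD : DecidableEq (IsoClass (Fintype.card (Fin n) - 1)) :=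
    Classical.decEq _
  obtain ⟨φG⟩ := hG
  obtain ⟨φH⟩ := hH
  -- active permutations never map `w` to `v`
  have key : ∀ σ : Equiv.Perm (Fin (n + 1)), ActivePerm Gp v w σ → σ.symm v ≠ w := by
    intro σ hσ h
    obtain ⟨e⟩ := iso_cards_of_symm_eq Gp v w σ hσ h
    exact hni.elim (φG.trans (e.trans φH.symm))
  have key2 : ∀ σ : Equiv.Perm (Fin (n + 1)), ActivePerm Gp v w σ → σ w ≠ v := by
    intro σ hσ h
    exact key σ hσ (by rw [← h, Equiv.symm_apply_apply])
  -- cardinality facts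
  have hcW : ∀ x : Fin (n + 1), x ≠ w →
      Fintype.card ↥{a : Fin (n + 1) | a ≠ w ∧ a ≠ x} = Fintype.card (Fin n) - 1 := by
    intro x hxw
    rw [card_set_ne_ne w x hxw, Fintype.card_fin]
    omega
  have hcV : ∀ y : Fin (n + 1), y ≠ v →
      Fintype.card ↥{a : Fin (n + 1) | a ≠ v ∧ a ≠ y} = Fintype.card (Fin n) - 1 := by
    intro y hyv
    rw [card_set_ne_ne v y hyv, Fintype.card_fin]
    omega
  -- the class-labelling maps
  set junk : IsoClass (Fintype.card (Fin n) - 1) :=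
    Quotient.mk (graphSetoid _) ⊥ with hjunk
  set F : Fin (n + 1) → IsoClass (Fintype.card (Fin n) - 1) := fun x =>
    if hx : x ≠ w then cls (hcW x hx) (Gp.induce {a : Fin (n + 1) | a ≠ w ∧ a ≠ x}) else junk
    with hFdef
  set Gf : Fin (n + 1) → IsoClass (Fintype.card (Fin n) - 1) := fun y =>
    if hy : y ≠ v then cls (hcV y hy) (Gp.induce {a : Fin (n + 1) | a ≠ v ∧ a ≠ y}) else junk
    with hGdef
  have hFval : ∀ (x : Fin (n + 1)) (hx : x ≠ w),
      F x = cls (hcW x hx) (Gp.induce {a : Fin (n + 1) | a ≠ w ∧ a ≠ x}) :=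
    fun x hx => dif_pos hx
  have hGval : ∀ (y : Fin (n + 1)) (hy : y ≠ v),
      Gf y = cls (hcV y hy) (Gp.induce {a : Fin (n + 1) | a ≠ v ∧ a ≠ y}) :=
    fun y hy => dif_pos hy
  have hdG : deck G = (Finset.univ.erase w).val.map F := deck_eq_map G Gp w φG F hcW hFval
  have hdH : deck H = (Finset.univ.erase v).val.map Gf := deck_eq_map H Gp v φH Gf hcV hGval
  have hcc : commonCards G H =
      Multiset.card ((Finset.univ.erase w).val.map F ∩ (Finset.univ.erase v).val.map Gf) := by
    unfold commonCards
    rw [hdG, hdH]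
  -- the matching associated to `Y`
  have hYfin : Y.Finite := Y.toFinite
  set M : Finset (Fin (n + 1) × Fin (n + 1)) :=
    hYfin.toFinset.image (fun l => (l.symm v, l w)) with hMdef
  have memM : ∀ p ∈ M, ∃ l, l ∈ Y ∧ (l.symm v, l w) = p := by
    intro p hp
    rw [hMdef, Finset.mem_image] at hp
    obtain ⟨l, hl, hlp⟩ := hp
    exact ⟨l, hYfin.mem_toFinset.1 hl, hlp⟩
  have hYM : Y.ncard = M.card := by
    rw [hMdef, Finset.card_image_of_injOn, Set.ncard_eq_toFinset_card _ hYfin]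
    intro l hl p hp hlp
    by_contra hne
    exact (hsat l (hYfin.mem_toFinset.1 hl) p (hYfin.mem_toFinset.1 hp) hne).1
      (congrArg Prod.fst hlp)
  have hMprop : ∀ p ∈ M, p.1 ∈ Finset.univ.erase w ∧ p.2 ∈ Finset.univ.erase v ∧
      F p.1 = Gf p.2 := by
    intro p hp
    obtain ⟨l, hlY, rfl⟩ := memM p hp
    have hact := hYB l hlY
    have h1 : l.symm v ≠ w := key l hact
    have h2 : l w ≠ v := key2 l hact
    refine ⟨Finset.mem_erase.2 ⟨h1, Finset.mem_univ _⟩,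
      Finset.mem_erase.2 ⟨h2, Finset.mem_univ _⟩, ?_⟩
    rw [hFval _ h1, hGval _ h2]
    exact cls_congr _ _ (iso_of_activePerm Gp v w l hact)
  have hinj1 : ∀ p ∈ M, ∀ q ∈ M, p.1 = q.1 → p = q := by
    intro p hp q hq hpq
    obtain ⟨l, hlY, rfl⟩ := memM p hp
    obtain ⟨l', hlY', rfl⟩ := memM q hq
    by_cases h : l = l'
    · rw [h]
    · exact absurd hpq (hsat l hlY l' hlY' h).1
  have hinj2 : ∀ p ∈ M, ∀ q ∈ M, p.2 = q.2 → p = q := by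
    intro p hp q hq hpq
    obtain ⟨l, hlY, rfl⟩ := memM p hp
    obtain ⟨l', hlY', rfl⟩ := memM q hq
    by_cases h : l = l'
    · rw [h]
    · exact absurd hpq (hsat l hlY l' hlY' h).2
  have main := maximal_matching_card (Finset.univ.erase w) (Finset.univ.erase v)
    F Gf M hMprop hinj1 hinj2
  have hext : (∃ σ : Equiv.Perm (Fin (n + 1)),
      ActivePerm Gp v w σ ∧ σ ∉ Y ∧ SatProp v w (insert σ Y)) ↔
      (∃ a ∈ Finset.univ.erase w, ∃ b ∈ Finset.univ.erase v,
        F a = Gf b ∧ ∀ p ∈ M, p.1 ≠ a ∧ p.2 ≠ b) := by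
    constructor
    · rintro ⟨σ, hact, hnotin, hsat'⟩
      refine ⟨σ.symm v, Finset.mem_erase.2 ⟨key σ hact, Finset.mem_univ _⟩,
        σ w, Finset.mem_erase.2 ⟨key2 σ hact, Finset.mem_univ _⟩, ?_, ?_⟩
      · rw [hFval _ (key σ hact), hGval _ (key2 σ hact)]
        exact cls_congr _ _ (iso_of_activePerm Gp v w σ hact)
      · intro p hp
        obtain ⟨l, hlY, rfl⟩ := memM p hp
        have hlσ : σ ≠ l := fun h => hnotin (h ▸ hlY)
        have hd := hsat' σ (Set.mem_insert _ _) l (Set.mem_insert_of_mem _ hlY) hlσ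
        exact ⟨Ne.symm hd.1, Ne.symm hd.2⟩
    · rintro ⟨a, haA, b, hbB, hfg, hun⟩
      have haw : a ≠ w := (Finset.mem_erase.1 haA).1
      have hbv : b ≠ v := (Finset.mem_erase.1 hbB).1
      rw [hFval _ haw, hGval _ hbv] at hfg
      obtain ⟨ψ⟩ := cls_exact _ _ hfg
      obtain ⟨σ, hact, hsv, hsw⟩ := activePerm_of_iso Gp v w a b haw hbv ψ
      have hσnot : σ ∉ Y := by
        intro hσY
        have hmem : (σ.symm v, σ w) ∈ M :=
          Finset.mem_image.2 ⟨σ, hYfin.mem_toFinset.2 hσY, rfl⟩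
        exact (hun _ hmem).1 hsv
      refine ⟨σ, hact, hσnot, ?_⟩
      intro l hl p hp hlp
      rcases Set.mem_insert_iff.1 hl with rfl | hlY
      · rcases Set.mem_insert_iff.1 hp with rfl | hpY
        · exact absurd rfl hlp
        · have hpM : (p.symm v, p w) ∈ M :=
            Finset.mem_image.2 ⟨p, hYfin.mem_toFinset.2 hpY, rfl⟩
          exact ⟨hsv ▸ Ne.symm (hun _ hpM).1, hsw ▸ Ne.symm (hun _ hpM).2⟩
      · rcases Set.mem_insert_iff.1 hp with rfl | hpY
        · have hlM : (l.symm v, l w) ∈ M :=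
            Finset.mem_image.2 ⟨l, hYfin.mem_toFinset.2 hlY, rfl⟩
          exact ⟨hsv ▸ (hun _ hlM).1, hsw ▸ (hun _ hlM).2⟩
        · exact hsat l hlY p hpY hlp
  rw [hYM, hcc, ← main]
  exact not_congr hext
end

section
/- Let U⁺ be a sunshine graph of order n+1 with skeleton cycle x₀…x_{c−1}x₀ that is a supercard of a sunshine graph U = U⁺ − w (w a leaf adjacent to x₀) and a caterpillar T = U⁺ − x_ν (with d_{U⁺}(x_ν) = 2). If λ is an active permutation in B_{vw}(U⁺), then λ⁻¹(x_ν) lies on the skeleton cycle of U, say λ⁻¹(x_ν) = x_μ, and d_U(x_μ) = d_T(λ(w)) + 1. -/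
open SimpleGraph

theorem edge_del {V : Type*} [Fintype V] (G : SimpleGraph V) (v : V) :
    (G.induce {u : V | u ≠ v}).edgeSet.ncard + deg G v = G.edgeSet.ncard := by
  classical
  have hinj : Function.Injective (Sym2.map (Subtype.val : {u : V | u ≠ v} → V)) :=
    Sym2.map.injective Subtype.val_injective
  have himg : (Sym2.map (Subtype.val : {u : V | u ≠ v} → V)) '' (G.induce {u : V | u ≠ v}).edgeSet
      = G.edgeSet \ G.incidenceSet v := by
    ext e
    constructor
    · rintro ⟨e', he', rfl⟩
      induction e' with
      | _ x y =>
        simp only [SimpleGraph.mem_edgeSet, comap_adj, Function.Embedding.coe_subtype] at he' ⊢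
        refine ⟨?_, ?_⟩
        · simpa using he'
        · intro hmem
          rcases hmem with ⟨hE, hv⟩
          rw [Sym2.map_pair_eq, Sym2.mem_iff] at hv
          rcases hv with h | h
          · exact x.2 h.symm
          · exact y.2 h.symm
    · rintro ⟨hE, hni⟩
      induction e with
      | _ x y =>
        have hx : x ≠ v := by
          intro h; exact hni ⟨hE, by rw [Sym2.mem_iff]; left; exact h.symm⟩
        have hy : y ≠ v := by
          intro h; exact hni ⟨hE, by rw [Sym2.mem_iff]; right; exact h.symm⟩
        refine ⟨s(⟨x, hx⟩, ⟨y, hy⟩), ?_, by simp⟩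
        simpa using hE
  have h1 : (G.induce {u : V | u ≠ v}).edgeSet.ncard = (G.edgeSet \ G.incidenceSet v).ncard := by
    rw [← himg, Set.ncard_image_of_injective _ hinj]
  have h2 : (G.incidenceSet v).ncard = deg G v := by
    rw [deg, ← Nat.card_coe_set_eq, ← Nat.card_coe_set_eq]
    exact Nat.card_congr (G.incidenceSetEquivNeighborSet v)
  rw [h1, ← h2]
  exact Set.ncard_diff_add_ncard_of_subset (G.incidenceSet_subset v) (Set.toFinite _)

theorem iso_edge {V W : Type*} {G : SimpleGraph V} {H : SimpleGraph W} (f : G ≃g H) :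
    G.edgeSet.ncard = H.edgeSet.ncard := by
  rw [← Nat.card_coe_set_eq, ← Nat.card_coe_set_eq]
  exact Nat.card_congr f.mapEdgeSet

theorem conn_deg {V : Type*} [Fintype V] {G : SimpleGraph V} (h : G.Connected) {x y : V}
    (hxy : x ≠ y) : 1 ≤ deg G x := by
  obtain ⟨p⟩ := h.preconnected x y
  cases p with
  | nil => exact absurd rfl hxy
  | cons ha _ =>
    have : (G.neighborSet x).Nonempty := ⟨_, ha⟩
    have := Set.ncard_pos (Set.toFinite _) |>.mpr this
    exact this


theorem stmt8 {V : Type*} [Fintype V] (Up : SimpleGraph V) (hSun : IsSunshine Up)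
    (w x0 xnu : V) (hw : deg Up w = 1) (hwx0 : Up.Adj w x0) (hnu : deg Up xnu = 2)
    (hU : IsSunshine (Up.induce {u : V | u ≠ w}))
    (hT : IsCaterpillar (Up.induce {u : V | u ≠ xnu}))
    (l : Equiv.Perm V) (hl : ActivePerm Up xnu w l) :
    ∃ (h1 : l.symm xnu ≠ w) (h2 : l w ≠ xnu),
      2 ≤ deg (Up.induce {u : V | u ≠ w}) ⟨l.symm xnu, h1⟩ ∧
      deg (Up.induce {u : V | u ≠ w}) ⟨l.symm xnu, h1⟩ =
        deg (Up.induce {u : V | u ≠ xnu}) ⟨l w, h2⟩ + 1 := by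
  classical
  have eU : (Up.induce {u : V | u ≠ w}).edgeSet.ncard + 1 = Up.edgeSet.ncard := by
    have h := edge_del Up w; rw [hw] at h; exact h
  have eT : (Up.induce {u : V | u ≠ xnu}).edgeSet.ncard + 2 = Up.edgeSet.ncard := by
    have h := edge_del Up xnu; rw [hnu] at h; exact h
  have h2 : l w ≠ xnu := by
    intro hlw
    have hsym : l.symm xnu = w := by rw [← hlw, Equiv.symm_apply_apply]
    have hiff : ∀ a : V, a ≠ w ↔ l a ≠ xnu := by
      intro a
      constructor
      · intro ha haa
        exact ha (by rw [← hsym, ← haa, Equiv.symm_apply_apply])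
      · intro ha haa
        exact ha (by rw [haa, hlw])
    have f : (Up.induce {u : V | u ≠ w}) ≃g (Up.induce {u : V | u ≠ xnu}) := by
      refine ⟨Equiv.subtypeEquiv l hiff, ?_⟩
      rintro ⟨a, ha⟩ ⟨b, hb⟩
      simp only [comap_adj, Function.Embedding.coe_subtype, Equiv.subtypeEquiv_apply]
      exact (hl a b ha (by rw [hsym]; exact ha) hb (by rw [hsym]; exact hb)).symm
    have := iso_edge f
    omega
  have h1 : l.symm xnu ≠ w := by
    intro h
    exact h2 (by rw [← h, Equiv.apply_symm_apply])
  have key1 : ∀ a : V, a ≠ l.symm xnu → l a ≠ xnu := by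
    intro a ha hc
    exact ha (by rw [← hc, Equiv.symm_apply_apply])
  have key2 : ∀ a : V, a ≠ w → l a ≠ l w := fun a ha hc => ha (l.injective hc)
  have key3 : ∀ b : V, b ≠ xnu → l.symm b ≠ l.symm xnu := fun b hb hc =>
    hb (l.symm.injective hc)
  have key4 : ∀ b : V, b ≠ l w → l.symm b ≠ w := by
    intro b hb hc
    exact hb (by rw [← hc, Equiv.apply_symm_apply])
  have g : ((Up.induce {u : V | u ≠ w}).induce
        {u : {u : V | u ≠ w} | u ≠ ⟨l.symm xnu, h1⟩}) ≃g
      ((Up.induce {u : V | u ≠ xnu}).induce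
        {u : {u : V | u ≠ xnu} | u ≠ ⟨l w, h2⟩}) := by
    have vne : ∀ x : {u : {u : V | u ≠ w} | u ≠ (⟨l.symm xnu, h1⟩ : {u : V | u ≠ w})},
        (x : {u : V | u ≠ w}).1 ≠ l.symm xnu := by
      rintro ⟨⟨a, haw⟩, hax⟩ hc
      exact hax (Subtype.ext hc)
    have vne' : ∀ y : {u : {u : V | u ≠ xnu} | u ≠ (⟨l w, h2⟩ : {u : V | u ≠ xnu})},
        (y : {u : V | u ≠ xnu}).1 ≠ l w := by
      rintro ⟨⟨b, hbx⟩, hbl⟩ hc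
      exact hbl (Subtype.ext hc)
    refine ⟨⟨fun x => ⟨⟨l x.1.1, key1 _ (vne x)⟩, fun hc => key2 _ x.1.2 (congrArg Subtype.val hc)⟩,
      fun y => ⟨⟨l.symm y.1.1, key4 _ (vne' y)⟩, fun hc => key3 _ y.1.2 (congrArg Subtype.val hc)⟩,
      ?_, ?_⟩, ?_⟩
    · rintro ⟨⟨a, haw⟩, hax⟩
      ext
      simp
    · rintro ⟨⟨b, hbx⟩, hbl⟩
      ext
      simp
    · rintro ⟨⟨a, haw⟩, hax⟩ ⟨⟨b, hbw⟩, hbx⟩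
      simp only [comap_adj, Function.Embedding.coe_subtype, Equiv.coe_fn_mk]
      exact (hl a b haw (vne ⟨⟨a, haw⟩, hax⟩) hbw (vne ⟨⟨b, hbw⟩, hbx⟩)).symm
  have eiso := iso_edge g
  have eU2 := edge_del (Up.induce {u : V | u ≠ w}) (⟨l.symm xnu, h1⟩ : {u : V | u ≠ w})
  have eT2 := edge_del (Up.induce {u : V | u ≠ xnu}) (⟨l w, h2⟩ : {u : V | u ≠ xnu})
  have hdT : 1 ≤ deg (Up.induce {u : V | u ≠ xnu}) ⟨l w, h2⟩ := by
    obtain ⟨a, b, hab, hset⟩ := Set.ncard_eq_two.mp hnu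
    have haA : Up.Adj xnu a := by
      have : a ∈ Up.neighborSet xnu := by rw [hset]; exact Set.mem_insert a {b}
      exact this
    have hbA : Up.Adj xnu b := by
      have : b ∈ Up.neighborSet xnu := by rw [hset]; exact Set.mem_insert_of_mem a rfl
      exact this
    have hax : a ≠ xnu := fun h => Up.irrefl (h ▸ haA)
    have hbx : b ≠ xnu := fun h => Up.irrefl (h ▸ hbA)
    rcases ne_or_eq a (l w) with hal | hal
    · exact conn_deg hT.1 (y := ⟨a, hax⟩) (fun hc => hal ((congrArg Subtype.val hc).symm))
    · have hbl : b ≠ l w := fun hc => hab (hal ▸ hc ▸ rfl)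
      exact conn_deg hT.1 (y := ⟨b, hbx⟩) (fun hc => hbl ((congrArg Subtype.val hc).symm))
  exact ⟨h1, h2, by omega, by omega⟩
end

section
/- Let U be a sunshine graph and T a caterpillar of the same order n, with a common supercard U⁺ that is a sunshine graph whose cycle has length c. Then the number of common cards satisfies b(U, T) ≤ c. -/
open SimpleGraph

section AuxLemmas

open Function Set

variable {α β : Type*}

/-- An embedding does not decrease degrees. -/
lemma deg_le_of_emb {G : SimpleGraph α} {H : SimpleGraph β} [Finite β] (f : G ↪g H) (v : α) :
    deg G v ≤ deg H (f v) := by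
  have himg : f '' (G.neighborSet v) ⊆ H.neighborSet (f v) := by
    rintro _ ⟨u, hu, rfl⟩
    exact f.map_rel_iff.mpr hu
  calc deg G v = (f '' G.neighborSet v).ncard :=
        (Set.ncard_image_of_injective _ f.injective).symm
    _ ≤ deg H (f v) := Set.ncard_le_ncard himg (Set.toFinite _)

/-- Isomorphisms preserve degrees. -/
lemma deg_eq_of_iso {G : SimpleGraph α} {H : SimpleGraph β} [Finite α] [Finite β]
    (e : G ≃g H) (v : α) : deg G v = deg H (e v) := by
  refine le_antisymm (deg_le_of_emb e.toEmbedding v) ?_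
  have := deg_le_of_emb e.symm.toEmbedding (e v)
  simpa using this

/-- The embedding of an induced subgraph into the ambient graph. -/
def inducedEmb (G : SimpleGraph α) (s : Set α) : G.induce s ↪g G where
  toFun := Subtype.val
  inj' := Subtype.val_injective
  map_rel_iff' := Iff.rfl

/-- The inclusion embedding between induced subgraphs on nested sets. -/
def incEmb (G : SimpleGraph α) {W S : Set α} (h : W ⊆ S) : G.induce W ↪g G.induce S where
  toFun := fun x => ⟨x.1, h x.2⟩
  inj' := by
    rintro ⟨a, _⟩ ⟨b, _⟩ hab
    simpa using hab
  map_rel_iff' := Iff.rfl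

/-- Induced subgraph of a comap along an injective map is isomorphic to the induced
subgraph on the image. -/
noncomputable def comapInduceIso (G : SimpleGraph β) (g : α → β) (hg : Function.Injective g)
    (W : Set α) : (G.comap g).induce W ≃g G.induce (g '' W) where
  toEquiv := Equiv.Set.image g W hg
  map_rel_iff' := by
    rintro ⟨a, ha⟩ ⟨b, hb⟩
    simp [Equiv.Set.image, Equiv.Set.imageOfInjOn]

lemma isCycleGraph_iso {G : SimpleGraph α} {H : SimpleGraph β} [Finite α] [Finite β]
    (e : G ≃g H) (h : IsCycleGraph G) : IsCycleGraph H := by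
  obtain ⟨hc, hd⟩ := h
  refine ⟨e.connected_iff.mp hc, fun v => ?_⟩
  have := deg_eq_of_iso e (e.symm v)
  simp only [RelIso.apply_symm_apply] at this
  rw [← this, hd]

/-- The graph contains an induced cycle-graph (i.e. a 2-regular connected induced subgraph). -/
def HasCyc (G : SimpleGraph α) : Prop := ∃ W : Set α, IsCycleGraph (G.induce W)

lemma hasCyc_comap {G : SimpleGraph β} {g : α → β} [Finite α] [Finite β]
    (hg : Function.Injective g) (h : HasCyc (G.comap g)) : HasCyc G := by
  obtain ⟨W, hW⟩ := h
  exact ⟨g '' W, isCycleGraph_iso (comapInduceIso G g hg W) hW⟩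

lemma hasCyc_iso {G : SimpleGraph α} {H : SimpleGraph β} [Finite α] [Finite β]
    (e : G ≃g H) (h : HasCyc G) : HasCyc H := by
  have hG : G = H.comap e := by
    ext a b
    exact e.map_rel_iff.symm
  rw [hG] at h
  exact hasCyc_comap e.injective h

/-- A finite connected 2-regular graph is not acyclic. -/
lemma not_acyclic_of_twoRegular {G : SimpleGraph α} [Finite α]
    (hc : G.Connected) (hd : ∀ v, deg G v = 2) (ha : G.IsAcyclic) : False := by
  classical
  cases nonempty_fintype α
  haveI : DecidableRel G.Adj := Classical.decRel _
  have htree : G.IsTree := ⟨hc, ha⟩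
  have hcard := htree.card_edgeFinset
  have hdeg : ∀ v, G.degree v = 2 := by
    intro v
    have h1 : deg G v = Fintype.card (G.neighborSet v) := by
      rw [deg, Set.ncard_eq_toFinset_card', Set.toFinset_card]
    rw [← SimpleGraph.card_neighborSet_eq_degree, ← h1, hd]
  have hsum := SimpleGraph.sum_degrees_eq_twice_card_edges G
  simp only [hdeg, Finset.sum_const, Finset.card_univ, smul_eq_mul] at hsum
  have hpos : 1 ≤ Fintype.card α := Fintype.card_pos_iff.mpr hc.nonempty
  omega

/-- The function along which `cardAt` is a comap. -/
noncomputable def cardAtFun {V : Type*} [Fintype V] [DecidableEq V] (v : V) :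
    Fin (Fintype.card V - 1) → V := fun i =>
  ((Fintype.equivOfCardEq
      (show Fintype.card (Fin (Fintype.card V - 1)) = Fintype.card {u : V // u ≠ v} by
        simp [Fintype.card_subtype_compl])) i : {u : V // u ≠ v}).val

lemma cardAt_eq {V : Type*} [Fintype V] [DecidableEq V] (G : SimpleGraph V) (v : V) :
    cardAt G v = G.comap (cardAtFun v) := rfl

lemma cardAtFun_injective {V : Type*} [Fintype V] [DecidableEq V] (v : V) :
    Function.Injective (cardAtFun v) := fun a b h => by
  exact (Fintype.equivOfCardEq _).injective (Subtype.ext h)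

lemma mem_range_cardAtFun {V : Type*} [Fintype V] [DecidableEq V] (v x : V) (hx : x ≠ v) :
    x ∈ Set.range (cardAtFun v) := by
  refine ⟨(Fintype.equivOfCardEq
      (show Fintype.card (Fin (Fintype.card V - 1)) = Fintype.card {u : V // u ≠ v} by
        simp [Fintype.card_subtype_compl])).symm ⟨x, hx⟩, ?_⟩
  simp [cardAtFun]

lemma hasCyc_cardAt {V : Type*} [Fintype V] [DecidableEq V] {G : SimpleGraph V} {v : V}
    (h : HasCyc (cardAt G v)) : HasCyc G := by
  rw [cardAt_eq] at h
  exact hasCyc_comap (cardAtFun_injective v) h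

/-- A caterpillar contains no induced cycle graph. -/
lemma caterpillar_no_cyc {n : ℕ} {T : SimpleGraph (Fin n)} (hT : IsCaterpillar T) :
    ¬ HasCyc T := by
  rintro ⟨W, hWconn, hWdeg⟩
  obtain ⟨hTc, hskc, hska, hskd⟩ := hT
  set S : Set (Fin n) := {v | 2 ≤ deg T v} with hSdef
  have hWS : W ⊆ S := by
    intro x hx
    have hle := deg_le_of_emb (inducedEmb T W) ⟨x, hx⟩
    rw [hWdeg ⟨x, hx⟩] at hle
    exact hle
  have hskd2 : ∀ (x : Fin n) (hx : x ∈ W), deg (skeleton T) ⟨x, hWS hx⟩ = 2 := by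
    intro x hx
    refine le_antisymm (hskd _) ?_
    have := deg_le_of_emb (incEmb T hWS) ⟨x, hx⟩
    rwa [hWdeg ⟨x, hx⟩] at this
  have hclosed : ∀ (y : S), y.val ∈ W → ∀ z : S, (skeleton T).Adj y z → z.val ∈ W := by
    intro y hy
    set N2 := (skeleton T).neighborSet y with hN2def
    have hN2 : N2.ncard = 2 := by
      have := hskd2 y.val hy
      rwa [deg] at this
    set N2' : Set S := {z | (skeleton T).Adj y z ∧ z.val ∈ W} with hN2'def
    have hsub : N2' ⊆ N2 := fun z hz => hz.1
    have h2le : 2 ≤ N2'.ncard := by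
      set f : W → S := fun z => ⟨z.val, hWS z.2⟩ with hfdef
      have hinj : Set.InjOn f ((T.induce W).neighborSet ⟨y.val, hy⟩) := by
        intro a _ b _ h
        have hval : (f a).val = (f b).val := congrArg Subtype.val h
        simp only [hfdef] at hval
        exact Subtype.ext hval
      have himg : f '' ((T.induce W).neighborSet ⟨y.val, hy⟩) ⊆ N2' := by
        rintro _ ⟨z, hz, rfl⟩
        exact ⟨hz, z.2⟩
      calc 2 = ((T.induce W).neighborSet ⟨y.val, hy⟩).ncard := (hWdeg ⟨y.val, hy⟩).symm
        _ = (f '' ((T.induce W).neighborSet ⟨y.val, hy⟩)).ncard :=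
            (Set.ncard_image_of_injOn hinj).symm
        _ ≤ N2'.ncard := Set.ncard_le_ncard himg (Set.toFinite _)
    have heq : N2' = N2 := Set.eq_of_subset_of_ncard_le hsub (by omega) (Set.toFinite _)
    intro z hz
    have hzN2 : z ∈ N2 := hz
    rw [← heq] at hzN2
    exact hzN2.2
  have hx0 : ∃ y : S, y.val ∈ W := by
    obtain ⟨x0⟩ := hWconn.nonempty
    exact ⟨⟨x0.val, hWS x0.2⟩, x0.2⟩
  obtain ⟨y0, hy0⟩ := hx0
  have hwalk : ∀ (a b : S) (_ : (skeleton T).Walk a b), a.val ∈ W → b.val ∈ W := by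
    intro a b p
    induction p with
    | nil => exact id
    | cons h _ ih => intro ha; exact ih (hclosed _ ha _ h)
  have hall : ∀ y : S, y.val ∈ W := by
    intro y
    obtain ⟨p⟩ := hskc y0 y
    exact hwalk y0 y p hy0
  have hreg : ∀ y : S, deg (skeleton T) y = 2 := by
    intro y
    have := hskd2 y.val (hall y)
    simpa using this
  exact not_acyclic_of_twoRegular hskc hreg hska

/-- Deleting a vertex of degree at most one from a sunshine graph leaves its cycle intact. -/
lemma sunshine_card_hasCyc {n : ℕ} {U : SimpleGraph (Fin n)} (hU : IsSunshine U) (u : Fin n)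
    (hu : deg U u < 2) : HasCyc (cardAt U u) := by
  set S : Set (Fin n) := {v | 2 ≤ deg U v} with hSdef
  set g := cardAtFun (V := Fin n) u with hgdef
  have hSsub : S ⊆ Set.range g := by
    intro x hx
    refine mem_range_cardAtFun u x ?_
    rintro rfl
    have : 2 ≤ deg U x := hx
    omega
  have himg : g '' (g ⁻¹' S) = S := Set.image_preimage_eq_of_subset hSsub
  refine ⟨g ⁻¹' S, ?_⟩
  have iso := comapInduceIso U g (cardAtFun_injective u) (g ⁻¹' S)
  rw [himg] at iso
  rw [cardAt_eq]
  exact isCycleGraph_iso iso.symm hU.2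

end AuxLemmas


theorem stmt9 (n : ℕ) (U T : SimpleGraph (Fin n)) (hU : IsSunshine U) (hT : IsCaterpillar T)
    (hb : 5 ≤ commonCards U T) (Up : SimpleGraph (Fin (n + 1)))
    (h1 : IsSupercardOf Up U) (h2 : IsSupercardOf Up T) (hS : IsSunshine Up) :
    commonCards U T ≤ {v : Fin (n + 1) | 2 ≤ deg Up v}.ncard := by
  letI : DecidableEq (IsoClass (Fintype.card (Fin n) - 1)) := Classical.decEq _
  classical
  have hcc : commonCards U T = Multiset.card ((deck U) ∩ (deck T)) := rfl
  -- Step 1: bound by the cards of U that contain no induced cycle graph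
  have hsub : (deck U) ∩ (deck T) ≤ (deck U).filter
      (fun c => ¬ ∃ G, Quotient.mk (graphSetoid (Fintype.card (Fin n) - 1)) G = c ∧ HasCyc G) := by
    rw [Multiset.le_filter]
    refine ⟨Multiset.inter_le_left, ?_⟩
    intro a ha
    have haT : a ∈ deck T := Multiset.mem_of_le Multiset.inter_le_right ha
    rw [deck, Multiset.mem_map] at haT
    obtain ⟨t, -, hEq⟩ := haT
    rintro ⟨G, hG, hcyc⟩
    obtain ⟨e⟩ := Quotient.exact (hG.trans hEq.symm)
    exact caterpillar_no_cyc hT (hasCyc_cardAt (hasCyc_iso e hcyc))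
  have hcard1 := Multiset.card_le_card hsub
  rw [hcc]
  refine le_trans hcard1 ?_
  rw [deck, Multiset.filter_map, Multiset.card_map]
  -- Step 2: such cards come from vertices of degree at least 2
  have hcard2 : Multiset.card (Multiset.filter
      ((fun c => ¬ ∃ G, Quotient.mk (graphSetoid (Fintype.card (Fin n) - 1)) G = c ∧ HasCyc G) ∘
        (fun v : Fin n => Quotient.mk (graphSetoid (Fintype.card (Fin n) - 1)) (cardAt U v)))
      Finset.univ.val) ≤
      Multiset.card (Multiset.filter (fun u : Fin n => 2 ≤ deg U u) Finset.univ.val) := by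
    apply Multiset.card_le_card
    apply Multiset.monotone_filter_right
    intro u hu
    by_contra hdeg
    exact hu ⟨cardAt U u, rfl, sunshine_card_hasCyc hU u (by omega)⟩
  refine le_trans hcard2 ?_
  have hcard3 : Multiset.card (Multiset.filter (fun u : Fin n => 2 ≤ deg U u) Finset.univ.val) =
      {u : Fin n | 2 ≤ deg U u}.ncard := by
    rw [← Finset.filter_val, ← Finset.card_def, Set.ncard_eq_toFinset_card']
    congr 1
    simp [Finset.ext_iff]
  rw [hcard3]
  -- Step 3: the skeleton set of U embeds into the skeleton set of Up
  obtain ⟨w, ⟨φ⟩⟩ := h1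
  apply Set.ncard_le_ncard_of_injOn (fun u => (φ u).val)
  · intro a ha
    have h1' : deg U a = deg (Up.induce {u : Fin (n + 1) | u ≠ w}) (φ a) := deg_eq_of_iso φ a
    have h2' : deg (Up.induce {u : Fin (n + 1) | u ≠ w}) (φ a) ≤ deg Up (φ a).val :=
      deg_le_of_emb (inducedEmb Up _) (φ a)
    have ha' : 2 ≤ deg U a := ha
    exact le_trans (h1' ▸ ha') h2'
  · exact fun a _ b _ h => φ.injective (Subtype.ext h)
end

section
/- Let U⁺ be a sunshine graph with cycle x₀…x_{c−1}x₀, a supercard of a sunshine graph U = U⁺ − w (w a leaf adjacent to x₀) and a caterpillar T = U⁺ − x_ν. Let θ ∈ B_U, i.e., θ is an active permutation with θ(U) = U⁺ − θ(w), and let u ∈ V(U⁺) \ {w, θ⁻¹(w)}. Then: (a) d_{U⁺}(u) = d_{U⁺}(θ(u)) + 1 if and only if u = x₀ and θ(w) is not adjacent to θ(x₀); (b) d_{U⁺}(u) = d_{U⁺}(θ(u)) − 1 if and only if u ≠ x₀ and θ(w) is adjacent to θ(u); (c) d_{U⁺}(u) = d_{U⁺}(θ(u)) otherwise. -/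
open SimpleGraph

open scoped Classical in
private theorem stmt10_key {V : Type*} [Fintype V] (Up : SimpleGraph V) (w : V)
    (θ : Equiv.Perm V) (hθ : IsCardIso Up w θ) (u : V) (hu1 : u ≠ w) :
    deg Up u + (if Up.Adj (θ u) (θ w) then 1 else 0)
      = deg Up (θ u) + (if Up.Adj u w then 1 else 0) := by
  have himg : θ '' (Up.neighborSet u \ {w}) = Up.neighborSet (θ u) \ {θ w} := by
    ext b
    constructor
    · rintro ⟨a, ⟨ha, haw⟩, rfl⟩
      exact ⟨(hθ u a hu1 haw).mp ha, fun h => haw (θ.injective h)⟩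
    · rintro ⟨hb, hbw⟩
      have hsw : θ.symm b ≠ w := fun h =>
        hbw (by rw [← θ.apply_symm_apply b, h]; exact rfl)
      refine ⟨θ.symm b, ⟨?_, hsw⟩, θ.apply_symm_apply b⟩
      have := (hθ u (θ.symm b) hu1 hsw).mpr
      rw [θ.apply_symm_apply] at this
      exact this hb
  have hcard : (Up.neighborSet u \ {w}).ncard = (Up.neighborSet (θ u) \ {θ w}).ncard := by
    rw [← himg, Set.ncard_image_of_injective _ θ.injective]
  have hdecomp : ∀ (v z : V), deg Up v = (Up.neighborSet v \ {z}).ncard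
      + (if Up.Adj v z then 1 else 0) := by
    intro v z
    by_cases h : Up.Adj v z
    · have hz : z ∈ Up.neighborSet v := h
      have : Up.neighborSet v = insert z (Up.neighborSet v \ {z}) := by
        rw [Set.insert_diff_singleton, Set.insert_eq_self.mpr hz]
      rw [if_pos h, deg, this, Set.ncard_insert_of_notMem (by simp)]
      simp [Set.insert_diff_self_of_notMem]
    · have : Up.neighborSet v \ {z} = Up.neighborSet v :=
        Set.diff_singleton_eq_self (by exact h)
      rw [if_neg h, deg, this]
      simp
  rw [hdecomp u w, hdecomp (θ u) (θ w), hcard]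
  ring

theorem stmt10 {V : Type*} [Fintype V] (Up : SimpleGraph V) (hSun : IsSunshine Up)
    (w x0 xnu : V) (hw : deg Up w = 1) (hwx0 : Up.Adj w x0) (hnu : deg Up xnu = 2)
    (hU : IsSunshine (Up.induce {u : V | u ≠ w}))
    (hT : IsCaterpillar (Up.induce {u : V | u ≠ xnu}))
    (θ : Equiv.Perm V) (hθ : IsCardIso Up w θ)
    (u : V) (hu1 : u ≠ w) (hu2 : u ≠ θ.symm w) :
    (deg Up u = deg Up (θ u) + 1 ↔ (u = x0 ∧ ¬ Up.Adj (θ w) (θ x0))) ∧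
    (deg Up u + 1 = deg Up (θ u) ↔ (u ≠ x0 ∧ Up.Adj (θ w) (θ u))) ∧
    (¬ (u = x0 ∧ ¬ Up.Adj (θ w) (θ x0)) → ¬ (u ≠ x0 ∧ Up.Adj (θ w) (θ u)) →
      deg Up u = deg Up (θ u)) := by
  have k := stmt10_key Up w θ hθ u hu1
  have hNw : Up.neighborSet w = {x0} := by
    obtain ⟨a, ha⟩ := Set.ncard_eq_one.mp hw
    have hx : x0 ∈ Up.neighborSet w := hwx0
    rw [ha] at hx ⊢
    rw [Set.mem_singleton_iff.mp hx]
  have hadj : Up.Adj u w ↔ u = x0 := by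
    rw [Up.adj_comm]
    change u ∈ Up.neighborSet w ↔ _
    rw [hNw, Set.mem_singleton_iff]
  rw [Up.adj_comm (θ u) (θ w)] at k
  by_cases h1 : u = x0
  · subst h1
    by_cases h2 : Up.Adj (θ w) (θ u)
    · rw [if_pos h2, if_pos (hadj.mpr rfl)] at k
      refine ⟨?_, ?_, ?_⟩ <;> simp [h2] <;> omega
    · rw [if_neg h2, if_pos (hadj.mpr rfl)] at k
      refine ⟨?_, ?_, ?_⟩ <;> simp [h2] <;> omega
  · by_cases h2 : Up.Adj (θ w) (θ u)
    · rw [if_pos h2, if_neg (fun h => h1 (hadj.mp h))] at k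
      refine ⟨?_, ?_, ?_⟩ <;> simp [h1, h2] <;> omega
    · rw [if_neg h2, if_neg (fun h => h1 (hadj.mp h))] at k
      refine ⟨?_, ?_, ?_⟩ <;> simp [h1, h2] <;> omega
end

section
/- With U⁺, U = U⁺ − w, w a leaf adjacent to x₀, and B_U as above: for θ ∈ B_U, one has d_{U⁺}(x₀) = d_{U⁺}(θ(x₀)) + 1 if and only if θ is not an automorphism of U⁺, and d_{U⁺}(x₀) = d_{U⁺}(θ(x₀)) if and only if θ is an automorphism of U⁺. In particular, if θ(x₀) = x₀ then θ ∈ Aut(U⁺). -/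
open SimpleGraph

section Aux

variable {V : Type*}

/-- If `v` has degree 1 and `u` is a neighbour of `v`, then the neighbour set of `v` is `{u}`. -/
private lemma neighborSet_eq_singleton {G : SimpleGraph V} {v u : V}
    (h1 : deg G v = 1) (hu : G.Adj v u) : G.neighborSet v = {u} := by
  obtain ⟨a, ha⟩ := Set.ncard_eq_one.mp h1
  have : u ∈ G.neighborSet v := hu
  rw [ha] at this
  rw [ha, this]

/-- The incidence set has cardinality the degree. -/
private lemma ncard_incidenceSet (G : SimpleGraph V) (v : V) :
    (G.incidenceSet v).ncard = deg G v := by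
  classical
  rw [deg, ← Nat.card_coe_set_eq, ← Nat.card_coe_set_eq]
  exact Nat.card_congr (G.incidenceSetEquivNeighborSet v)

/-- Edge count split at a vertex. -/
private lemma edgeSet_ncard_split [Fintype V] (G : SimpleGraph V) (v : V) :
    G.edgeSet.ncard = deg G v + {e ∈ G.edgeSet | v ∉ e}.ncard := by
  have hsplit : G.edgeSet = G.incidenceSet v ∪ {e ∈ G.edgeSet | v ∉ e} := by
    ext e
    constructor
    · intro he
      by_cases hv : v ∈ e
      · exact Or.inl ⟨he, hv⟩
      · exact Or.inr ⟨he, hv⟩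
    · rintro (he | he) <;> exact he.1
  have hdisj : Disjoint (G.incidenceSet v) {e ∈ G.edgeSet | v ∉ e} := by
    rw [Set.disjoint_left]
    rintro e ⟨_, hv⟩ ⟨_, hnv⟩
    exact hnv hv
  conv_lhs => rw [hsplit]
  rw [Set.ncard_union_eq hdisj (Set.toFinite _) (Set.toFinite _), ncard_incidenceSet]

/-- The image of `w` under a card-isomorphism of a graph with leaf `w` is again a leaf. -/
private lemma deg_theta_w [Fintype V] (Up : SimpleGraph V) (w : V)
    (hw : deg Up w = 1) (θ : Equiv.Perm V) (hθ : IsCardIso Up w θ) :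
    deg Up (θ w) = 1 := by
  set A : Set (Sym2 V) := {e ∈ Up.edgeSet | w ∉ e} with hA
  set B : Set (Sym2 V) := {e ∈ Up.edgeSet | θ w ∉ e} with hB
  have himg : Sym2.map θ '' A = B := by
    ext e
    constructor
    · rintro ⟨e', ⟨he', hwe'⟩, rfl⟩
      induction e' using Sym2.inductionOn with
      | hf a b =>
        have haw : a ≠ w := fun h => hwe' (h ▸ Sym2.mem_mk_left a b)
        have hbw : b ≠ w := fun h => hwe' (h ▸ Sym2.mem_mk_right a b)
        refine ⟨(hθ a b haw hbw).mp he', ?_⟩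
        rw [Sym2.map_pair_eq, Sym2.mem_iff]
        rintro (h | h)
        · exact haw (θ.injective h.symm)
        · exact hbw (θ.injective h.symm)
    · intro he
      induction e using Sym2.inductionOn with
      | hf c d =>
        obtain ⟨hcd, hne⟩ := he
        have hcw : c ≠ θ w := fun h => hne (h ▸ Sym2.mem_mk_left c d)
        have hdw : d ≠ θ w := fun h => hne (h ▸ Sym2.mem_mk_right c d)
        refine ⟨s(θ.symm c, θ.symm d), ⟨?_, ?_⟩, ?_⟩
        · have h1 : θ.symm c ≠ w := fun h => hcw (by rw [← h, Equiv.apply_symm_apply])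
          have h2 : θ.symm d ≠ w := fun h => hdw (by rw [← h, Equiv.apply_symm_apply])
          refine (hθ _ _ h1 h2).mpr ?_
          simpa using hcd
        · rw [Sym2.mem_iff]
          rintro (h | h)
          · exact hcw (by rw [h, Equiv.apply_symm_apply])
          · exact hdw (by rw [h, Equiv.apply_symm_apply])
        · simp [Sym2.map_pair_eq]
  have hcard : A.ncard = B.ncard := by
    rw [← himg, Set.ncard_image_of_injective _ (Sym2.map.injective θ.injective)]
  have h1 := edgeSet_ncard_split Up w
  have h2 := edgeSet_ncard_split Up (θ w)
  rw [hw, ← hA] at h1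
  rw [← hB] at h2
  omega

/-- The key degree relation: `deg (θ x0)` versus `deg x0`. -/
private lemma deg_rel [Fintype V] (Up : SimpleGraph V) (w x0 : V)
    (hw : deg Up w = 1) (hwx0 : Up.Adj w x0) (θ : Equiv.Perm V) (hθ : IsCardIso Up w θ) :
    (Up.Adj (θ w) (θ x0) → deg Up (θ x0) = deg Up x0) ∧
    (¬ Up.Adj (θ w) (θ x0) → deg Up x0 = deg Up (θ x0) + 1) := by
  have hx0w : x0 ≠ w := hwx0.ne.symm
  have hset : Up.neighborSet (θ x0) \ {θ w} = θ '' (Up.neighborSet x0 \ {w}) := by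
    ext c
    constructor
    · rintro ⟨hc, hcw⟩
      have h2 : θ.symm c ≠ w := by
        intro h
        apply hcw
        rw [Set.mem_singleton_iff, ← h, Equiv.apply_symm_apply]
      refine ⟨θ.symm c, ⟨?_, ?_⟩, by simp⟩
      · refine (hθ x0 (θ.symm c) hx0w h2).mpr ?_
        simpa using hc
      · simpa using h2
    · rintro ⟨b, ⟨hb, hbw⟩, rfl⟩
      exact ⟨(hθ x0 b hx0w hbw).mp hb, fun h => hbw (θ.injective h)⟩
  have hS : (Up.neighborSet x0 \ {w}).ncard + 1 = deg Up x0 :=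
    Set.ncard_diff_singleton_add_one (hwx0.symm : w ∈ Up.neighborSet x0) (Set.toFinite _)
  have hcard : (Up.neighborSet (θ x0) \ {θ w}).ncard = (Up.neighborSet x0 \ {w}).ncard := by
    rw [hset, Set.ncard_image_of_injective _ θ.injective]
  constructor
  · intro hadj
    have h3 : (Up.neighborSet (θ x0) \ {θ w}).ncard + 1 = deg Up (θ x0) :=
      Set.ncard_diff_singleton_add_one
        (hadj.symm : θ w ∈ Up.neighborSet (θ x0)) (Set.toFinite _)
    rw [← h3, hcard, hS]
  · intro hnadj
    have heq : Up.neighborSet (θ x0) \ {θ w} = Up.neighborSet (θ x0) := by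
      apply Set.diff_singleton_eq_self
      intro h
      exact hnadj (h : Up.Adj (θ x0) (θ w)).symm
    rw [← hS, ← hcard, heq]
    rfl

/-- If `θ w` is adjacent to `θ x0` then `θ` is an automorphism. -/
private lemma aut_of_adj [Fintype V] (Up : SimpleGraph V) (w x0 : V)
    (hw : deg Up w = 1) (hwx0 : Up.Adj w x0) (θ : Equiv.Perm V) (hθ : IsCardIso Up w θ)
    (hadj : Up.Adj (θ w) (θ x0)) : IsAutG Up θ := by
  have hθw : deg Up (θ w) = 1 := deg_theta_w Up w hw θ hθ
  have hnw : Up.neighborSet w = {x0} := neighborSet_eq_singleton hw hwx0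
  have hnθw : Up.neighborSet (θ w) = {θ x0} := neighborSet_eq_singleton hθw hadj
  have key : ∀ b : V, Up.Adj (θ w) (θ b) ↔ Up.Adj w b := by
    intro b
    have h1 : Up.Adj (θ w) (θ b) ↔ θ b = θ x0 := by
      constructor
      · intro h
        have : θ b ∈ Up.neighborSet (θ w) := h
        rwa [hnθw] at this
      · rintro h
        rw [h]; exact hadj
    have h2 : Up.Adj w b ↔ b = x0 := by
      constructor
      · intro h
        have : b ∈ Up.neighborSet w := h
        rwa [hnw] at this
      · rintro rfl; exact hwx0
    rw [h1, h2, θ.injective.eq_iff]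
  intro a b
  by_cases haw : a = w
  · rw [haw]
    exact key b
  · by_cases hbw : b = w
    · rw [hbw, Up.adj_comm (θ a) (θ w), Up.adj_comm a w]
      exact key a
    · exact (hθ a b haw hbw).symm

end Aux

theorem stmt11 {V : Type*} [Fintype V] (Up : SimpleGraph V) (hSun : IsSunshine Up)
    (w x0 xnu : V) (hw : deg Up w = 1) (hwx0 : Up.Adj w x0) (hnu : deg Up xnu = 2)
    (hU : IsSunshine (Up.induce {u : V | u ≠ w}))
    (hT : IsCaterpillar (Up.induce {u : V | u ≠ xnu}))
    (θ : Equiv.Perm V) (hθ : IsCardIso Up w θ) :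
    (deg Up x0 = deg Up (θ x0) + 1 ↔ ¬ IsAutG Up θ) ∧
    (deg Up x0 = deg Up (θ x0) ↔ IsAutG Up θ) ∧
    (θ x0 = x0 → IsAutG Up θ) := by
  obtain ⟨hrel1, hrel2⟩ := deg_rel Up w x0 hw hwx0 θ hθ
  by_cases hadj : Up.Adj (θ w) (θ x0)
  · have haut : IsAutG Up θ := aut_of_adj Up w x0 hw hwx0 θ hθ hadj
    have hdeg := hrel1 hadj
    refine ⟨⟨fun h => absurd haut ?_, fun h => absurd haut h⟩, ⟨fun _ => haut, fun _ => hdeg.symm⟩,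
      fun _ => haut⟩
    omega
  · have hdeg := hrel2 hadj
    have hnaut : ¬ IsAutG Up θ := fun haut => hadj ((haut w x0).mpr hwx0)
    refine ⟨⟨fun _ => hnaut, fun _ => hdeg⟩, ⟨fun h => ?_, fun h => absurd h hnaut⟩, fun h => ?_⟩
    · omega
    · rw [h] at hdeg
      omega
end

section
/- With U⁺, w, x₀, and B_U as above: if λ ∈ B_U is not an automorphism of U⁺ and λ²(x₀) = x₀, then λ(w) is adjacent to x₀ in U⁺. In particular, every reflection in B_U that is not an automorphism of U⁺ maps w to a leaf adjacent to x₀. -/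
open SimpleGraph

open scoped Classical

section MyAux

variable {V : Type*} [Fintype V] (Up : SimpleGraph V) (w : V) (l : Equiv.Perm V)

omit [Fintype V] in
lemma my_img_lemma (h : IsCardIso Up w l) {u : V} (hu : u ≠ w) :
    (l : V → V) '' (Up.neighborSet u \ {w}) = Up.neighborSet (l u) \ {l w} := by
  ext b
  simp only [Set.mem_image, Set.mem_diff, SimpleGraph.mem_neighborSet, Set.mem_singleton_iff]
  constructor
  · rintro ⟨a, ⟨hadj, haw⟩, rfl⟩
    exact ⟨((h a u haw hu).mp hadj.symm).symm, fun he => haw (l.injective he)⟩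
  · rintro ⟨hadj, hbw⟩
    have h2 : l.symm b ≠ w := by
      intro he
      apply hbw
      rw [← l.apply_symm_apply b, he]
    refine ⟨l.symm b, ⟨?_, h2⟩, l.apply_symm_apply b⟩
    have := (h (l.symm b) u h2 hu).mpr ?_
    · exact this.symm
    · rw [l.apply_symm_apply]
      exact hadj.symm

lemma my_diff_ncard (G : SimpleGraph V) (a u : V) :
    (G.neighborSet u \ {a}).ncard + (if G.Adj u a then 1 else 0) = deg G u := by
  by_cases hh : G.Adj u a
  · rw [if_pos hh]
    exact Set.ncard_diff_singleton_add_one hh (Set.toFinite _)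
  · rw [if_neg hh, add_zero, Set.diff_singleton_eq_self (by simpa using hh : a ∉ G.neighborSet u)]
    rfl

lemma my_key (h : IsCardIso Up w l) {u : V} (hu : u ≠ w) :
    deg Up u + (if Up.Adj (l u) (l w) then 1 else 0)
      = deg Up (l u) + (if Up.Adj u w then 1 else 0) := by
  have hcard : (Up.neighborSet u \ {w}).ncard = (Up.neighborSet (l u) \ {l w}).ncard := by
    rw [← my_img_lemma Up w l h hu, Set.ncard_image_of_injective _ l.injective]
  have h1 := my_diff_ncard Up w u
  have h2 := my_diff_ncard Up (l w) (l u)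
  omega

lemma my_total (G : SimpleGraph V) (a : V) :
    ∑ u ∈ (Finset.univ.erase a), (G.neighborSet u \ {a}).ncard + 2 * deg G a
      = ∑ u : V, deg G u := by
  have h1 : ∑ u : V, ((G.neighborSet u \ {a}).ncard + (if G.Adj u a then 1 else 0))
      = ∑ u : V, deg G u := Finset.sum_congr rfl fun u _ => my_diff_ncard G a u
  rw [Finset.sum_add_distrib] at h1
  have h2 : ∑ u : V, (if G.Adj u a then 1 else 0) = deg G a := by
    have hset : G.neighborSet a = ↑(Finset.univ.filter fun u => G.Adj u a) := by
      ext u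
      simp [SimpleGraph.adj_comm]
    rw [deg, hset, Set.ncard_coe_finset]
    simp [Finset.sum_boole]
  have h3 : ∑ u : V, (G.neighborSet u \ {a}).ncard
      = ∑ u ∈ Finset.univ.erase a, (G.neighborSet u \ {a}).ncard + deg G a := by
    rw [← Finset.sum_erase_add _ _ (Finset.mem_univ a)]
    congr 1
    rw [Set.diff_singleton_eq_self (by simp : a ∉ G.neighborSet a)]
    rfl
  omega

lemma my_deg_lw (h : IsCardIso Up w l) : deg Up (l w) = deg Up w := by
  have hre : ∑ u ∈ (Finset.univ.erase w), (Up.neighborSet u \ {w}).ncard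
      = ∑ v ∈ (Finset.univ.erase (l w)), (Up.neighborSet v \ {l w}).ncard := by
    refine Finset.sum_equiv l ?_ ?_
    · intro i
      simp [Finset.mem_erase, l.injective.ne_iff]
    · intro i hi
      rw [Finset.mem_erase] at hi
      rw [← my_img_lemma Up w l h hi.1, Set.ncard_image_of_injective _ l.injective]
  have h1 := my_total Up w
  have h2 := my_total Up (l w)
  omega

omit [Fintype V] in
lemma my_nbhd_deg_one (G : SimpleGraph V) {v u : V} (h1 : deg G v = 1) (h2 : G.Adj v u) :
    ∀ a, G.Adj v a ↔ a = u := by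
  obtain ⟨a, ha⟩ := Set.ncard_eq_one.mp h1
  have hu : u ∈ G.neighborSet v := h2
  rw [ha, Set.mem_singleton_iff] at hu
  intro b
  constructor
  · intro hb
    have hb' : b ∈ G.neighborSet v := hb
    rw [ha, Set.mem_singleton_iff] at hb'
    rw [hb', ← hu]
  · rintro rfl; exact h2

end MyAux

theorem stmt13 {V : Type*} [Fintype V] (Up : SimpleGraph V) (hSun : IsSunshine Up)
    (c : ℕ) (hc : 6 ≤ c) (x : ZMod c → V) (hinj : Function.Injective x)
    (hcyc : ∀ i, Up.Adj (x i) (x (i + 1)))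
    (hskel : ∀ v : V, 2 ≤ deg Up v ↔ v ∈ Set.range x)
    (w : V) (ν : ZMod c) (hw : deg Up w = 1) (hwx0 : Up.Adj w (x 0))
    (hnu : deg Up (x ν) = 2)
    (hU : IsSunshine (Up.induce {u : V | u ≠ w}))
    (hT : IsCaterpillar (Up.induce {u : V | u ≠ x ν})) :
    (∀ l : Equiv.Perm V, IsCardIso Up w l → ¬ IsAutG Up l →
      l (l (x 0)) = x 0 → Up.Adj (l w) (x 0)) ∧
    (∀ l : Equiv.Perm V, IsCardIso Up w l → ¬ IsAutG Up l →
      (∃ α : ZMod c, ∀ i, l (x i) = x (α - i)) →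
      deg Up (l w) = 1 ∧ Up.Adj (l w) (x 0)) := by
  have main : ∀ l : Equiv.Perm V, IsCardIso Up w l → ¬ IsAutG Up l →
      l (l (x 0)) = x 0 → Up.Adj (l w) (x 0) := by
    -- basic facts
    have hd2 : ∀ i, 2 ≤ deg Up (x i) := fun i => (hskel (x i)).mpr ⟨i, rfl⟩
    have hnw : ∀ a, Up.Adj w a ↔ a = x 0 := my_nbhd_deg_one Up hw hwx0
    haveI : NeZero c := ⟨by omega⟩
    have hcast : ∀ n : ℕ, (n : ZMod c) = 0 ↔ c ∣ n := fun n =>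
      (ZMod.natCast_eq_zero_iff n c)
    have h10 : (1 : ZMod c) ≠ 0 := by
      intro h
      have := Nat.le_of_dvd one_pos ((hcast 1).mp (by exact_mod_cast h))
      omega
    have h1m1 : (1 : ZMod c) ≠ -1 := by
      intro h
      have h2 : ((2 : ℕ) : ZMod c) = 0 := by push_cast; linear_combination h
      have := Nat.le_of_dvd two_pos ((hcast 2).mp h2)
      omega
    have hm10 : (-1 : ZMod c) ≠ 0 := by
      intro h
      exact h10 (by linear_combination -h)
    have hwx : ∀ i : ZMod c, w ≠ x i := by
      intro i he
      have := hd2 i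
      rw [← he, hw] at this
      omega
    have h3 : 3 ≤ deg Up (x 0) := by
      have hsub : ({w, x 1, x (-1)} : Set V) ⊆ Up.neighborSet (x 0) := by
        intro a ha
        rcases ha with rfl | rfl | ha
        · exact hwx0.symm
        · simpa using hcyc 0
        · rw [Set.mem_singleton_iff] at ha
          subst ha
          have := (hcyc (-1)).symm
          simpa using this
      have hcard : ({w, x 1, x (-1)} : Set V).ncard = 3 := by
        rw [Set.ncard_insert_of_notMem (by
          simp only [Set.mem_insert_iff, Set.mem_singleton_iff]
          push_neg
          exact ⟨hwx 1, hwx (-1)⟩) (Set.toFinite _),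
          Set.ncard_pair (fun he => h1m1 (hinj he))]
      calc 3 = ({w, x 1, x (-1)} : Set V).ncard := hcard.symm
      _ ≤ _ := Set.ncard_le_ncard hsub (Set.toFinite _)
    intro l hci hnaut hl2
    have hdlw : deg Up (l w) = 1 := by rw [my_deg_lw Up w l hci, hw]
    have hx0w : x 0 ≠ w := fun he => hwx 0 he.symm
    by_cases hfix : l (x 0) = x 0
    · have hk := my_key Up w l hci hx0w
      rw [hfix, if_pos hwx0.symm] at hk
      by_cases hA : Up.Adj (x 0) (l w)
      · exact hA.symm
      · rw [if_neg hA] at hk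
        omega
    · have hlx0w : l (x 0) ≠ w := by
        intro he
        have hk := my_key Up w l hci hx0w
        rw [he, hw, if_pos hwx0.symm] at hk
        split_ifs at hk <;> omega
      have hk1 := my_key Up w l hci hx0w
      have hk2 := my_key Up w l hci hlx0w
      rw [hl2] at hk2
      have hnadj : ¬ Up.Adj (l (x 0)) w := fun hA => hfix ((hnw (l (x 0))).mp hA.symm)
      rw [if_pos hwx0.symm] at hk1
      rw [if_neg hnadj] at hk2
      by_cases hA : Up.Adj (x 0) (l w)
      · exact hA.symm
      · exfalso
        rw [if_neg hA, add_zero] at hk2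
        have hAdj : Up.Adj (l (x 0)) (l w) := by
          by_contra hB
          rw [if_neg hB] at hk1
          omega
        apply hnaut
        have hnlw : ∀ a, Up.Adj (l w) a ↔ a = l (x 0) := my_nbhd_deg_one Up hdlw hAdj.symm
        intro a b
        by_cases haw' : a = w <;> by_cases hbw' : b = w
        · subst haw'; subst hbw'; simp
        · subst haw'
          constructor
          · intro hAb
            have hb := l.injective ((hnlw (l b)).mp hAb)
            rw [hb]
            exact hwx0
          · intro hAb
            have hb := (hnw b).mp hAb
            subst hb
            exact (hnlw (l (x 0))).mpr rfl
        · rw [hbw']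
          rw [Up.adj_comm (l a) (l w), Up.adj_comm a w]
          constructor
          · intro hAb
            have hb := l.injective ((hnlw (l a)).mp hAb)
            rw [hb]
            exact hwx0
          · intro hAb
            have hb := (hnw a).mp hAb
            subst hb
            exact (hnlw (l (x 0))).mpr rfl
        · exact (hci a b haw' hbw').symm
  refine ⟨main, ?_⟩
  rintro l hci hnaut ⟨α, hα⟩
  refine ⟨by rw [my_deg_lw Up w l hci, hw], main l hci hnaut ?_⟩
  have h1 : l (x 0) = x α := by rw [hα 0, sub_zero]
  rw [h1, hα α, sub_self]
end

section
/- With U⁺, w, x₀, and B_U as above: if there exists λ ∈ B_U acting as a rotation on the cycle, with λ ∈ Aut(U⁺) and λ(x₀) ≠ x₀ (a non-trivial rotation automorphism), then every element of B_U is an automorphism of U⁺, i.e., B_U = Aut(U⁺). -/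
open SimpleGraph

section Helpers

open scoped Classical

lemma zmodConst {c : ℕ} [NeZero c] {X : Type*} (f : ZMod c → X) (h : ∀ i, f (i+1) = f i) :
    ∀ i, f i = f 0 := by
  have key : ∀ n : ℕ, f (n : ZMod c) = f 0 := by
    intro n
    induction n with
    | zero => simp
    | succ n ih => push_cast; rw [h]; exact ih
  intro i
  obtain ⟨n, rfl⟩ := ZMod.natCast_zmod_surjective i
  exact key n

lemma reachClosed {V : Type*} (G : SimpleGraph V) (S : Set V)
    (hS : ∀ a ∈ S, ∀ b, G.Adj a b → b ∈ S) : ∀ {u v : V}, u ∈ S → G.Reachable u v → v ∈ S := by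
  intro u v hu h
  obtain ⟨p⟩ := h
  induction p with
  | nil => exact hu
  | cons h p ih => exact ih (hS _ hu _ h)

lemma ncardSplit {V : Type*} [Fintype V] (A : Set V) (e : V) :
    A.ncard = (A \ {e}).ncard + (if e ∈ A then 1 else 0) := by
  by_cases h : e ∈ A
  · rw [if_pos h]
    exact (Set.ncard_diff_singleton_add_one h (Set.toFinite A)).symm
  · rw [if_neg h, Set.diff_singleton_eq_self h, add_zero]

end Helpers

theorem stmt14 {V : Type*} [Fintype V] (Up : SimpleGraph V) (hSun : IsSunshine Up)
    (c : ℕ) (hc : 6 ≤ c) (x : ZMod c → V) (hinj : Function.Injective x)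
    (hcyc : ∀ i, Up.Adj (x i) (x (i + 1)))
    (hskel : ∀ v : V, 2 ≤ deg Up v ↔ v ∈ Set.range x)
    (w : V) (ν : ZMod c) (hw : deg Up w = 1) (hwx0 : Up.Adj w (x 0))
    (hnu : deg Up (x ν) = 2)
    (hU : IsSunshine (Up.induce {u : V | u ≠ w}))
    (hT : IsCaterpillar (Up.induce {u : V | u ≠ x ν}))
    (l : Equiv.Perm V) (hl : IsCardIso Up w l)
    (hrot : ∃ α : ZMod c, ∀ i, l (x i) = x (α + i))
    (hlA : IsAutG Up l) (hne : l (x 0) ≠ x 0) :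
    ∀ θ : Equiv.Perm V, IsCardIso Up w θ ↔ IsAutG Up θ := by
  classical
  haveI : NeZero c := ⟨by omega⟩
  haveI : Fact (1 < c) := ⟨by omega⟩
  obtain ⟨conn, connSkel, hreg⟩ := hSun
  -- basic facts
  have hdegx : ∀ i, 2 ≤ deg Up (x i) := fun i => (hskel _).2 ⟨i, rfl⟩
  have hwnx : ∀ i, w ≠ x i := by
    intro i h
    have := (hskel w).2 ⟨i, h.symm⟩
    omega
  have two_ne : (2 : ZMod c) ≠ 0 := by
    intro h
    have h2 : ((2 : ℕ) : ZMod c) = 0 := by exact_mod_cast h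
    have hdvd := (ZMod.natCast_eq_zero_iff 2 c).mp h2
    have := Nat.le_of_dvd (by norm_num) hdvd
    omega
  have Nw : Up.neighborSet w = {x 0} := by
    have hw' : (Up.neighborSet w).ncard = 1 := hw
    obtain ⟨a, ha⟩ := Set.ncard_eq_one.mp hw'
    have hx0 : x 0 ∈ Up.neighborSet w := hwx0
    rw [ha] at hx0 ⊢
    rw [Set.mem_singleton_iff.mp hx0]
  -- adjacency between cycle vertices only for consecutive indices
  have adj_xx : ∀ i j : ZMod c, Up.Adj (x i) (x j) → j = i + 1 ∨ j = i - 1 := by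
    intro i j hadj
    set S : Set V := {v : V | 2 ≤ deg Up v} with hS
    have hmem : ∀ k : ZMod c, x k ∈ S := fun k => hdegx k
    set a : ↥S := ⟨x i, hmem i⟩ with hadef
    have hdeg2 : deg (skeleton Up) a = 2 := hreg a
    have hne1 : (⟨x (i+1), hmem _⟩ : ↥S) ≠ ⟨x (i-1), hmem _⟩ := by
      intro h
      have h2 := hinj (Subtype.ext_iff.mp h)
      apply two_ne
      calc (2 : ZMod c) = (i + 1) - (i - 1) := by ring
        _ = 0 := by rw [h2]; ring
    have hsub : ({⟨x (i+1), hmem _⟩, ⟨x (i-1), hmem _⟩} : Set ↥S) ⊆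
        (skeleton Up).neighborSet a := by
      rintro b (rfl | rfl)
      · exact hcyc i
      · have h1 : Up.Adj (x (i-1)) (x (i-1+1)) := hcyc (i-1)
        have he : i - 1 + 1 = i := by ring
        rw [he] at h1
        exact h1.symm
    have heq : ({⟨x (i+1), hmem _⟩, ⟨x (i-1), hmem _⟩} : Set ↥S) =
        (skeleton Up).neighborSet a := by
      apply Set.eq_of_subset_of_ncard_le hsub
      rw [Set.ncard_pair hne1]
      exact le_of_eq hdeg2
    have hb : (⟨x j, hmem j⟩ : ↥S) ∈ (skeleton Up).neighborSet a := hadj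
    rw [← heq] at hb
    rcases hb with h | h
    · left; exact hinj (Subtype.ext_iff.mp h)
    · right; exact hinj (Subtype.ext_iff.mp h)
  -- no isolated vertices
  have noiso : ∀ v : V, 1 ≤ deg Up v := by
    intro v
    have hex : ∃ u : V, u ≠ v := by
      by_cases h : v = x 0
      · exact ⟨x 1, by rw [h]; exact fun hh => one_ne_zero (hinj hh)⟩
      · exact ⟨x 0, fun hh => h hh.symm⟩
    obtain ⟨u, hu⟩ := hex
    obtain ⟨p⟩ := conn v u
    cases p with
    | nil => exact absurd rfl hu.symm
    | cons hadj p =>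
      have h := (Set.ncard_pos (Set.toFinite (Up.neighborSet v))).mpr ⟨_, hadj⟩
      exact h
  -- degree invariance under the rotation automorphism l
  have degl : ∀ v, deg Up (l v) = deg Up v := by
    intro v
    have himg : Up.neighborSet (l v) = l '' Up.neighborSet v := by
      ext z
      simp only [mem_neighborSet, Set.mem_image]
      constructor
      · intro h
        refine ⟨l.symm z, ?_, by simp⟩
        apply (hlA v (l.symm z)).mp
        simpa using h
      · rintro ⟨u, hu, rfl⟩
        exact (hlA v u).mpr hu
    show (Up.neighborSet (l v)).ncard = (Up.neighborSet v).ncard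
    rw [himg, Set.ncard_image_of_injective _ l.injective]
  obtain ⟨α, hα⟩ := hrot
  have per : ∀ j, deg Up (x (α + j)) = deg Up (x j) := fun j => by rw [← hα j, degl]
  have perm : ∀ j, deg Up (x (j - α)) = deg Up (x j) := by
    intro j
    have h := per (j - α)
    rw [show α + (j - α) = j by ring] at h
    exact h.symm
  have αne : α ≠ 0 := by
    intro h
    apply hne
    rw [hα 0, h, zero_add]
  -- deg x 0 ≥ 3
  have hx03 : 3 ≤ deg Up (x 0) := by
    have hsub : ({w, x 1, x (-1)} : Set V) ⊆ Up.neighborSet (x 0) := by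
      rintro z (rfl | rfl | rfl)
      · exact hwx0.symm
      · have h := hcyc 0; rwa [zero_add] at h
      · have h := hcyc (-1); rw [neg_add_cancel] at h; exact h.symm
    have h1 : x 1 ≠ x (-1) := by
      intro h
      apply two_ne
      have h2 := hinj h
      calc (2 : ZMod c) = 1 - (-1) := by ring
        _ = 0 := by rw [← h2]; ring
    have hcard : ({w, x 1, x (-1)} : Set V).ncard = 3 := by
      rw [Set.ncard_insert_of_notMem (by rintro (h | h) <;> exact hwnx _ h) (Set.toFinite _),
        Set.ncard_pair h1]
    calc 3 = ({w, x 1, x (-1)} : Set V).ncard := hcard.symm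
      _ ≤ _ := Set.ncard_le_ncard hsub (Set.toFinite _)
  -- Adjacency to w characterisation
  have adjw : ∀ v : V, Up.Adj v w ↔ v = x 0 := by
    intro v
    constructor
    · intro h
      have hm : v ∈ Up.neighborSet w := h.symm
      rwa [Nw, Set.mem_singleton_iff] at hm
    · rintro rfl; exact hwx0.symm
  intro θ
  constructor
  swap
  · intro h a b _ _
    exact (h a b).symm
  intro hθ
  -- the degree equation for the card isomorphism
  have E : ∀ v : V, v ≠ w → ∃ m, deg Up v = m + (if Up.Adj v w then 1 else 0) ∧
      deg Up (θ v) = m + (if Up.Adj (θ v) (θ w) then 1 else 0) := by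
    intro v hv
    have himg : θ '' (Up.neighborSet v \ {w}) = Up.neighborSet (θ v) \ {θ w} := by
      ext z
      constructor
      · rintro ⟨u, ⟨hu, hune⟩, rfl⟩
        exact ⟨(hθ v u hv hune).mp hu, fun h => hune (θ.injective h)⟩
      · rintro ⟨hz, hzw⟩
        refine ⟨θ.symm z, ⟨?_, ?_⟩, by simp⟩
        · apply (hθ v (θ.symm z) hv ?_).mpr
          · simpa using hz
          · intro h
            apply hzw
            rw [← h]; simp
        · intro h
          apply hzw
          rw [← h]; simp
    refine ⟨(Up.neighborSet v \ {w}).ncard, ?_, ?_⟩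
    · show (Up.neighborSet v).ncard = _
      rw [ncardSplit (Up.neighborSet v) w]
      congr 1
    · show (Up.neighborSet (θ v)).ncard = _
      rw [ncardSplit (Up.neighborSet (θ v)) (θ w), ← himg,
        Set.ncard_image_of_injective _ θ.injective]
      congr 1
  -- θ maps cycle vertices to cycle vertices
  have degθx : ∀ i, 2 ≤ deg Up (θ (x i)) := by
    intro i
    obtain ⟨m, h1, h2⟩ := E (x i) (hwnx i).symm
    by_cases hi : i = 0
    · subst hi
      have h3 := hx03
      split_ifs at h1 h2 <;> omega
    · have hna : ¬ Up.Adj (x i) w := fun h => hi (hinj ((adjw (x i)).mp h))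
      have h3 := hdegx i
      rw [if_neg hna] at h1
      split_ifs at h2 <;> omega
  have hσex : ∀ i, ∃ j, x j = θ (x i) := fun i => (hskel _).1 (degθx i)
  choose σ hσ using hσex
  have σinj : Function.Injective σ := by
    intro i j h
    apply hinj
    apply θ.injective
    rw [← hσ i, ← hσ j, h]
  have step : ∀ i, σ (i+1) = σ i + 1 ∨ σ (i+1) = σ i - 1 := by
    intro i
    have hadj : Up.Adj (θ (x i)) (θ (x (i+1))) :=
      (hθ _ _ (hwnx i).symm (hwnx (i+1)).symm).mp (hcyc i)
    rw [← hσ i, ← hσ (i+1)] at hadj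
    exact adj_xx _ _ hadj
  set s : ZMod c → ZMod c := fun i => σ (i+1) - σ i with hsdef
  have hstep : ∀ i, σ (i+1) = σ i + s i := by intro i; show _ = σ i + (σ (i+1) - σ i); ring
  have hs : ∀ i, s i = 1 ∨ s i = -1 := by
    intro i
    rcases step i with h | h
    · left; show σ (i+1) - σ i = 1; rw [h]; ring
    · right; show σ (i+1) - σ i = -1; rw [h]; ring
  have hsstep : ∀ i, s (i+1) = s i := by
    intro i
    have key : σ (i+1+1) = σ i + s i + s (i+1) := by rw [hstep (i+1), hstep i]
    rcases hs i with h1 | h1 <;> rcases hs (i+1) with h2 | h2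
    · rw [h1, h2]
    · exfalso
      rw [h1, h2] at key
      have : σ (i+1+1) = σ i := by rw [key]; ring
      have h3 := σinj this
      exact two_ne (by linear_combination h3)
    · exfalso
      rw [h1, h2] at key
      have : σ (i+1+1) = σ i := by rw [key]; ring
      have h3 := σinj this
      exact two_ne (by linear_combination h3)
    · rw [h1, h2]
  have hscon : ∀ i, s i = s 0 := zmodConst s hsstep
  have σlin : ∀ i, σ i = σ 0 + s 0 * i := by
    have hg : ∀ i, σ (i+1) - s 0 * (i+1) = σ i - s 0 * i := by
      intro i
      rw [hstep i, hscon i]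
      ring
    have hc2 := zmodConst (fun i => σ i - s 0 * i) hg
    intro i
    have hi := hc2 i
    simp only [mul_zero, sub_zero] at hi
    linear_combination hi
  -- θ w is a leaf
  have σsurj : Function.Surjective σ := Finite.injective_iff_surjective.mp σinj
  have θwnx : ∀ j, θ w ≠ x j := by
    intro j h
    obtain ⟨i, rfl⟩ := σsurj j
    rw [hσ i] at h
    exact hwnx i (θ.injective h)
  have degθw : deg Up (θ w) = 1 := by
    have h1 : ¬ 2 ≤ deg Up (θ w) := by
      rw [hskel]
      rintro ⟨j, hj⟩
      exact θwnx j hj.symm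
    have h2 := noiso (θ w)
    omega
  -- the unique neighbour of θ w is a cycle vertex
  have degθw' : (Up.neighborSet (θ w)).ncard = 1 := degθw
  obtain ⟨y, hy⟩ := Set.ncard_eq_one.mp degθw'
  have hyadj : Up.Adj (θ w) y := by
    have : y ∈ Up.neighborSet (θ w) := by rw [hy]; rfl
    exact this
  have ydeg2 : 2 ≤ deg Up y := by
    by_contra hlt
    have hy1 : (Up.neighborSet y).ncard = 1 := by
      have := noiso y
      have : ¬ (2 ≤ deg Up y) := hlt
      show deg Up y = 1
      omega
    have Ny : Up.neighborSet y = {θ w} := by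
      obtain ⟨a, ha⟩ := Set.ncard_eq_one.mp hy1
      have hm : θ w ∈ Up.neighborSet y := hyadj.symm
      rw [ha] at hm ⊢
      rw [Set.mem_singleton_iff.mp hm]
    have hclosed : ∀ a ∈ ({θ w, y} : Set V), ∀ b, Up.Adj a b → b ∈ ({θ w, y} : Set V) := by
      intro a ha b hab
      simp only [Set.mem_insert_iff, Set.mem_singleton_iff] at ha ⊢
      rcases ha with rfl | rfl
      · right
        have hm : b ∈ Up.neighborSet (θ w) := hab
        rw [hy, Set.mem_singleton_iff] at hm
        exact hm
      · left
        have hm : b ∈ Up.neighborSet a := hab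
        rw [Ny, Set.mem_singleton_iff] at hm
        exact hm
    have hx0in : x 0 ∈ ({θ w, y} : Set V) :=
      reachClosed Up _ hclosed (Set.mem_insert _ _) (conn (θ w) (x 0))
    rcases hx0in with h | h
    · exact θwnx 0 h.symm
    · rw [Set.mem_singleton_iff] at h
      have h2 := hdegx 0
      rw [← h] at hlt
      exact hlt h2
  obtain ⟨β, hβ⟩ := (hskel y).1 ydeg2
  -- the degree equation on the cycle
  have Ei : ∀ i, deg Up (x (σ i)) + (if i = 0 then 1 else 0) =
      deg Up (x i) + (if σ i = β then 1 else 0) := by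
    intro i
    obtain ⟨m, h1, h2⟩ := E (x i) (hwnx i).symm
    rw [← hσ i] at h2
    have c1 : Up.Adj (x i) w ↔ i = 0 := by
      rw [adjw]
      exact ⟨fun h => hinj h, fun h => by rw [h]⟩
    have c2 : Up.Adj (x (σ i)) (θ w) ↔ σ i = β := by
      constructor
      · intro h
        have hm : x (σ i) ∈ Up.neighborSet (θ w) := h.symm
        rw [hy, Set.mem_singleton_iff] at hm
        apply hinj
        rw [hm, hβ]
      · intro h
        rw [h, hβ]
        exact hyadj.symm
    simp only [c1] at h1
    simp only [c2] at h2
    split_ifs at h1 h2 ⊢ <;> omega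
  -- conclude σ 0 = β
  have tσ : deg Up (x (σ α)) = deg Up (x (σ 0)) := by
    rw [σlin α]
    rcases hs 0 with h | h
    · rw [h, show σ 0 + 1 * α = α + σ 0 by ring]
      exact per (σ 0)
    · rw [h, show σ 0 + (-1) * α = σ 0 - α by ring]
      exact perm (σ 0)
  have E0 := Ei 0
  have Eα := Ei α
  rw [if_pos rfl] at E0
  rw [if_neg αne] at Eα
  have hα0 : deg Up (x α) = deg Up (x 0) := by
    have h := per 0
    rwa [add_zero] at h
  have hσ0β : σ 0 = β := by
    by_contra hcon
    rw [if_neg hcon] at E0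
    rw [tσ, hα0] at Eα
    split_ifs at Eα <;> omega
  have θx0 : θ (x 0) = x β := by rw [← hσ 0, hσ0β]
  -- conclude that θ is an automorphism
  intro a b
  by_cases ha : a = w <;> by_cases hb : b = w
  · rw [ha, hb]
    simp
  · rw [ha]
    constructor
    · intro h
      have hm : θ b ∈ Up.neighborSet (θ w) := h
      rw [hy, Set.mem_singleton_iff] at hm
      rw [← hβ, ← θx0] at hm
      have : b = x 0 := θ.injective hm
      rw [this]
      exact hwx0
    · intro h
      have hm : b ∈ Up.neighborSet w := h
      rw [Nw, Set.mem_singleton_iff] at hm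
      rw [hm, θx0, hβ]
      exact hyadj
  · rw [hb]
    constructor
    · intro h
      have hm : θ a ∈ Up.neighborSet (θ w) := h.symm
      rw [hy, Set.mem_singleton_iff] at hm
      rw [← hβ, ← θx0] at hm
      have : a = x 0 := θ.injective hm
      rw [this]
      exact hwx0.symm
    · intro h
      have hm : a ∈ Up.neighborSet w := h.symm
      rw [Nw, Set.mem_singleton_iff] at hm
      rw [hm, θx0, hβ]
      exact hyadj.symm
  · exact (hθ a b ha hb).symm
end
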